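/- arXiv:2001.03448 — 4 statements merged into one kernel-verified Lean document; each statement's English description precedes it below -/
import Mathlib

section
/- (Chvátal–Thomassen Lemma) Let G be an undirected graph, let k ≥ 1, and let B ⊆ V(G) be such that (i) B is a k-step dominating set of G, and (ii) the graph G/B obtained by contracting B to a single vertex is 2-edge connected. Then there exists an oriented subgraph →H of G \ G[B] such that (1) V(→H) is a (k−1)-step dominating set of G, and (2) for every v ∈ V(→H), d_→H(B, v) ≤ 2k and d_→H(v, B) ≤ 2k. -/
/-- There is a directed walk of length at most `n` from `u` to `v` along the relation `D`. -/
def DiPathLE {V : Type*} (D : V → V → Prop) (u v : V) (n : ℕ) : Prop :=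
  ∃ m ≤ n, ∃ f : ℕ → V, f 0 = u ∧ f m = v ∧ ∀ i < m, D (f i) (f (i + 1))

/-- `O` is an orientation of `G`: every arc of `O` is an edge of `G`, and every edge of `G`
gets exactly one of the two possible directions. -/
def IsOrientation {V : Type*} (G : SimpleGraph V) (O : V → V → Prop) : Prop :=
  (∀ u v, O u v → G.Adj u v) ∧ ∀ u v, G.Adj u v → (O u v ↔ ¬ O v u)

/-- `G` is 2-edge connected: connected and without bridges. -/
def TwoEdgeConnected {V : Type*} (G : SimpleGraph V) : Prop :=
  G.Connected ∧ ∀ e, ¬ G.IsBridge e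

/-- `G` has diameter exactly `d`. -/
def HasDiam {V : Type*} (G : SimpleGraph V) (d : ℕ) : Prop :=
  G.Connected ∧ (∀ u v, G.dist u v ≤ d) ∧ ∃ u v, G.dist u v = d

/-- `B` is a `k`-step dominating set of `G`. -/
def KStepDom {V : Type*} (G : SimpleGraph V) (B : Set V) (k : ℕ) : Prop :=
  ∀ v, ∃ u ∈ B, ∃ w : G.Walk v u, w.length ≤ k

/-- `D` is an oriented subgraph of `G` with vertex set `S`: every arc of `D` is an
orientation of an edge of `G` with both endpoints in `S`, and no edge receives
both directions. -/
def IsOrientedSubgraph {V : Type*} (G : SimpleGraph V) (S : Set V) (D : V → V → Prop) : Prop :=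
  (∀ u v, D u v → G.Adj u v ∧ u ∈ S ∧ v ∈ S) ∧ ∀ u v, ¬ (D u v ∧ D v u)

/-- The setoid identifying all the vertices of `B`. -/
def contractSetoid {V : Type*} (B : Set V) : Setoid V where
  r x y := x = y ∨ (x ∈ B ∧ y ∈ B)
  iseqv := by
    refine ⟨fun _ => Or.inl rfl, ?_, ?_⟩
    · rintro x y (rfl | h)
      · exact Or.inl rfl
      · exact Or.inr ⟨h.2, h.1⟩
    · rintro x y z (rfl | h1) (rfl | h2)
      · exact Or.inl rfl
      · exact Or.inr h2
      · exact Or.inr h1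
      · exact Or.inr ⟨h1.1, h2.2⟩

/-- The graph `G/B` obtained from `G` by contracting the set `B` to a single vertex
(removing resulting loops). -/
def contractGraph {V : Type*} (G : SimpleGraph V) (B : Set V) :
    SimpleGraph (Quotient (contractSetoid B)) where
  Adj a b := a ≠ b ∧ ∃ x y, Quotient.mk (contractSetoid B) x = a ∧
    Quotient.mk (contractSetoid B) y = b ∧ G.Adj x y
  symm := by
    constructor
    rintro a b ⟨hne, x, y, hx, hy, hadj⟩
    exact ⟨hne.symm, y, x, hy, hx, hadj.symm⟩
  loopless := by
    constructor
    rintro a ⟨hne, -⟩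
    exact hne rfl

/-- `k` is the length of a shortest cycle of `G` containing the edge `pq`. -/
def ShortestCycleThroughEdge {V : Type*} (G : SimpleGraph V) (p q : V) (k : ℕ) : Prop :=
  (∃ (a : V) (c : G.Walk a a), c.IsCycle ∧ s(p, q) ∈ c.edges ∧ c.length = k) ∧
  ∀ (a : V) (c : G.Walk a a), c.IsCycle → s(p, q) ∈ c.edges → k ≤ c.length

/-- `G` has radius exactly `r`. -/
def HasRadius {V : Type*} (G : SimpleGraph V) (r : ℕ) : Prop :=
  G.Connected ∧ (∃ v, ∀ u, G.dist v u ≤ r) ∧ ∀ v, ∃ u, r ≤ G.dist v u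

namespace CTaux


variable {V : Type*} {D : V → V → Prop} {u v w : V} {m n : ℕ}

lemma dip_refl (v : V) : DiPathLE D v v 0 :=
  ⟨0, le_rfl, fun _ => v, rfl, rfl, by omega⟩

lemma dip_mono_n (h : DiPathLE D u v m) (hmn : m ≤ n) : DiPathLE D u v n := by
  obtain ⟨a, ha, f, h0, h1, h2⟩ := h
  exact ⟨a, ha.trans hmn, f, h0, h1, h2⟩

lemma dip_mono_D {D' : V → V → Prop} (hD : ∀ a b, D a b → D' a b)
    (h : DiPathLE D u v n) : DiPathLE D' u v n := by
  obtain ⟨a, ha, f, h0, h1, h2⟩ := h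
  exact ⟨a, ha, f, h0, h1, fun i hi => hD _ _ (h2 i hi)⟩

lemma dip_single (h : D u v) : DiPathLE D u v 1 := by
  refine ⟨1, le_rfl, fun i => if i = 0 then u else v, by simp, by simp, ?_⟩
  intro i hi
  have : i = 0 := by omega
  simp [this, h]

lemma dip_trans (h1 : DiPathLE D u v m) (h2 : DiPathLE D v w n) :
    DiPathLE D u w (m + n) := by
  classical
  obtain ⟨a, ha, f, hf0, hf1, hf2⟩ := h1
  obtain ⟨b, hb, g, hg0, hg1, hg2⟩ := h2
  set h : ℕ → V := fun i => if i < a then f i else g (i - a) with hh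
  have key : ∀ i ≤ a + b, h i = if i < a then f i else g (i - a) := fun i _ => rfl
  have hha : ∀ i, i ≥ a → h i = g (i - a) := by
    intro i hi
    simp only [hh]
    rw [if_neg (by omega)]
  have hhb : ∀ i, i < a → h i = f i := by
    intro i hi
    simp only [hh]
    rw [if_pos hi]
  have hfa : f a = g 0 := by rw [hf1, hg0]
  refine ⟨a + b, by omega, h, ?_, ?_, ?_⟩
  · by_cases h0 : 0 < a
    · rw [hhb 0 h0]; exact hf0
    · have ha0 : a = 0 := by omega
      rw [hha 0 (by omega)]
      subst ha0
      rw [Nat.sub_zero, hg0, ← hf1, hf0]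
  · rw [hha (a + b) (by omega), Nat.add_sub_cancel_left]; exact hg1
  · intro i hi
    by_cases hc : i + 1 < a
    · rw [hhb i (by omega), hhb (i+1) hc]
      exact hf2 i (by omega)
    · by_cases hc2 : i < a
      · have hia : i + 1 = a := by omega
        rw [hhb i hc2, hha (i+1) (by omega), hia, Nat.sub_self, ← hfa, ← hia]
        exact hf2 i (by omega)
      · rw [hha i (by omega), hha (i+1) (by omega)]
        have e1 : i + 1 - a = i - a + 1 := by omega
        rw [e1]
        exact hg2 (i - a) (by omega)

lemma dip_flip (h : DiPathLE D u v n) : DiPathLE (fun a b => D b a) v u n := by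
  obtain ⟨a, ha, f, hf0, hf1, hf2⟩ := h
  refine ⟨a, ha, fun i => f (a - i), by simpa using hf1, by simpa using hf0, ?_⟩
  intro i hi
  show D (f (a - (i+1))) (f (a - i))
  have e : a - i = (a - (i+1)) + 1 := by omega
  rw [e]
  exact hf2 _ (by omega)



open SimpleGraph
variable {V : Type*} {G : SimpleGraph V}

lemma getVert_mem {a c : V} {W : G.Walk a c} {n : ℕ} (hn : n ≤ W.length) :
    W.getVert n ∈ W.support :=
  Walk.mem_support_iff_exists_getVert.mpr ⟨n, rfl, hn⟩

lemma exists_split {a c : V} (W : G.Walk a c) (i : ℕ) (hi : i ≤ W.length) :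
    ∃ (y : V) (W₁ : G.Walk a y) (W₂ : G.Walk y c), W = W₁.append W₂ ∧ W₁.length = i := by
  induction W generalizing i with
  | nil =>
    have : i = 0 := by simpa using hi
    exact ⟨_, Walk.nil, Walk.nil, rfl, by simp [this]⟩
  | @cons u v c h W ih =>
    cases i with
    | zero => exact ⟨u, Walk.nil, Walk.cons h W, by simp, rfl⟩
    | succ i' =>
      obtain ⟨y, W₁, W₂, hEq, hlen⟩ := ih i' (by simpa using hi)
      exact ⟨y, Walk.cons h W₁, W₂, by rw [Walk.cons_append, ← hEq], by simp [hlen]⟩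

lemma exists_first (Q : V → Prop) : ∀ {a c : V} (W : G.Walk a c), Q c →
    ∃ (d : V) (W₁ : G.Walk a d) (W₂ : G.Walk d c), W = W₁.append W₂ ∧ Q d ∧
      ∀ v ∈ W₁.support, v = d ∨ ¬ Q v
  | a, _, Walk.nil, hc => ⟨a, Walk.nil, Walk.nil, rfl, hc, by simp⟩
  | a, c, Walk.cons (v := v) h W, hc => by
    classical
    by_cases hu : Q a
    · exact ⟨a, Walk.nil, Walk.cons h W, by simp, hu, by simp⟩
    · obtain ⟨d, W₁, W₂, hEq, hd, hsup⟩ := exists_first Q W hc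
      refine ⟨d, Walk.cons h W₁, W₂, by rw [Walk.cons_append, ← hEq], hd, ?_⟩
      intro x hx
      rw [Walk.support_cons] at hx
      rcases List.mem_cons.mp hx with hx1 | hx1
      · subst hx1; exact Or.inr hu
      · exact hsup x hx1

lemma exists_penult {a c : V} (W : G.Walk a c) (h : 1 ≤ W.length) :
    ∃ (y : V) (W₁ : G.Walk a y), G.Adj y c ∧ W₁.length + 1 = W.length := by
  induction W with
  | nil => simp at h
  | @cons u v c h' W ih =>
    by_cases h0 : W.length = 0
    · have hvc : v = c := Walk.eq_of_length_eq_zero h0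
      subst hvc
      exact ⟨u, Walk.nil, h', by simp [h0]⟩
    · obtain ⟨y, W₁, hAdj, hlen⟩ := ih (by omega)
      refine ⟨y, Walk.cons h' W₁, hAdj, ?_⟩
      simp only [Walk.length_cons]
      omega

lemma path_getVert_inj {a c : V} (p : G.Walk a c) (hp : p.IsPath) :
    ∀ i ≤ p.length, ∀ j ≤ p.length, p.getVert i = p.getVert j → i = j := by
  induction p with
  | nil =>
    intro i hi j hj _
    simp only [Walk.length_nil] at hi hj
    omega
  | @cons u v c h W ih =>
    intro i hi j hj hij
    have hW : W.IsPath := hp.of_cons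
    have hu : u ∉ W.support := ((Walk.cons_isPath_iff h W).mp hp).2
    simp only [Walk.length_cons] at hi hj
    match i, j with
    | 0, 0 => rfl
    | 0, (j'+1) =>
      exfalso
      rw [Walk.getVert_zero, Walk.getVert_cons_succ] at hij
      exact hu (hij ▸ getVert_mem (by omega : j' ≤ W.length))
    | (i'+1), 0 =>
      exfalso
      rw [Walk.getVert_zero, Walk.getVert_cons_succ] at hij
      exact hu (hij.symm ▸ getVert_mem (by omega : i' ≤ W.length))
    | (i'+1), (j'+1) =>
      rw [Walk.getVert_cons_succ, Walk.getVert_cons_succ] at hij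
      have := ih hW i' (by omega) j' (by omega) hij
      omega



open SimpleGraph

variable {V : Type*} {G : SimpleGraph V} {B : Set V} {k : ℕ}

/-- endpoint of an arc of `D` -/
def EpD (D : V → V → Prop) (v : V) : Prop := ∃ w, D v w ∨ D w v

/-- special vertices: in `B` or an endpoint -/
def SpD (B : Set V) (D : V → V → Prop) (v : V) : Prop := v ∈ B ∨ EpD D v

def OutLE (B : Set V) (D : V → V → Prop) (v : V) (n : ℕ) : Prop :=
  ∃ c ∈ B, DiPathLE D v c n

def InLE (B : Set V) (D : V → V → Prop) (v : V) (n : ℕ) : Prop :=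
  ∃ c ∈ B, DiPathLE D c v n

/-- distance to `B` -/
noncomputable def dB (G : SimpleGraph V) (B : Set V) (v : V) : ℕ :=
  sInf {n | ∃ c ∈ B, ∃ w : G.Walk v c, w.length ≤ n}

def GoodD (G : SimpleGraph V) (B : Set V) (k : ℕ) (D : V → V → Prop) : Prop :=
  (∀ u v, D u v → G.Adj u v) ∧ (∀ u v, D u v → ¬(u ∈ B ∧ v ∈ B)) ∧
  (∀ u v, D u v → ¬ D v u) ∧
  (∀ v, EpD D v → InLE B D v (2*k) ∧ OutLE B D v (2*k) ∧
    ∃ n, n ≤ dB G B v ∧ (OutLE B D v n ∨ InLE B D v n))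

section dBfacts

lemma dB_nonempty (dom : KStepDom G B k) (v : V) : {n | ∃ c ∈ B, ∃ w : G.Walk v c, w.length ≤ n}.Nonempty := by
  obtain ⟨c, hc, w, hw⟩ := dom v
  exact ⟨k, c, hc, w, hw⟩

lemma dB_le_k (dom : KStepDom G B k) (v : V) : dB G B v ≤ k := by
  obtain ⟨c, hc, w, hw⟩ := dom v
  exact Nat.sInf_le ⟨c, hc, w, hw⟩

lemma dB_walk (dom : KStepDom G B k) (v : V) : ∃ c ∈ B, ∃ w : G.Walk v c, w.length ≤ dB G B v :=
  Nat.sInf_mem (dB_nonempty dom v)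

lemma dB_le_of_walk {v c : V} (hc : c ∈ B) (w : G.Walk v c) : dB G B v ≤ w.length :=
  Nat.sInf_le ⟨c, hc, w, le_rfl⟩

lemma dB_pos (dom : KStepDom G B k) {v : V} (hv : v ∉ B) : 1 ≤ dB G B v := by
  by_contra h
  have h0 : dB G B v = 0 := by omega
  obtain ⟨c, hc, w, hw⟩ := dB_walk dom v
  rw [h0, Nat.le_zero] at hw
  have := SimpleGraph.Walk.eq_of_length_eq_zero hw
  exact hv (this ▸ hc)

end dBfacts

lemma cert_Sp {D : V → V → Prop} {z : V} {n : ℕ}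
    (h : OutLE B D z n ∨ InLE B D z n) : SpD B D z := by
  rcases h with ⟨c, hc, m, _, f, hf0, hf1, hf2⟩ | ⟨c, hc, m, _, f, hf0, hf1, hf2⟩
  · rcases Nat.eq_zero_or_pos m with hm | hm
    · subst hm; rw [hf0] at hf1; exact Or.inl (hf1 ▸ hc)
    · exact Or.inr ⟨f 1, Or.inl (hf0 ▸ hf2 0 hm)⟩
  · rcases Nat.eq_zero_or_pos m with hm | hm
    · subst hm; rw [hf0] at hf1; exact Or.inl (hf1.symm ▸ hc)
    · have := hf2 (m-1) (by omega)
      have e : m - 1 + 1 = m := by omega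
      rw [e] at this
      exact Or.inr ⟨f (m-1), Or.inr (hf1 ▸ this)⟩

/-- flip of a digraph -/
def flipD (D : V → V → Prop) : V → V → Prop := fun u v => D v u

lemma EpD_flip {D : V → V → Prop} {v : V} : EpD (flipD D) v ↔ EpD D v := by
  unfold EpD flipD
  constructor <;> (rintro ⟨w, h | h⟩; exacts [⟨w, Or.inr h⟩, ⟨w, Or.inl h⟩])

lemma SpD_flip {D : V → V → Prop} {v : V} : SpD B (flipD D) v ↔ SpD B D v := by
  unfold SpD; rw [EpD_flip]

lemma dip_flip' {D : V → V → Prop} {u v : V} {n : ℕ} :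
    DiPathLE (flipD D) u v n ↔ DiPathLE D v u n :=
  ⟨fun h => dip_flip (D := flipD D) h, fun h => dip_flip (D := D) h⟩

lemma OutLE_flip {D : V → V → Prop} {v : V} {n : ℕ} :
    OutLE B (flipD D) v n ↔ InLE B D v n := by
  unfold OutLE InLE
  constructor <;> (rintro ⟨c, hc, h⟩; exact ⟨c, hc, dip_flip'.mp h⟩)

lemma InLE_flip {D : V → V → Prop} {v : V} {n : ℕ} :
    InLE B (flipD D) v n ↔ OutLE B D v n := by
  unfold OutLE InLE
  constructor <;> (rintro ⟨c, hc, h⟩; exact ⟨c, hc, dip_flip'.mp h⟩)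

lemma GoodD_flip {D : V → V → Prop} (h : GoodD G B k D) : GoodD G B k (flipD D) := by
  obtain ⟨h1, h2, h3, h4⟩ := h
  refine ⟨fun u v hv => (h1 v u hv).symm, fun u v hv => fun ⟨hu', hv'⟩ => h2 v u hv ⟨hv', hu'⟩,
    fun u v hv hv' => h3 v u hv hv', ?_⟩
  intro v hv
  obtain ⟨g1, g2, g3⟩ := h4 v (EpD_flip.mp hv)
  refine ⟨InLE_flip.mpr g2, OutLE_flip.mpr g1, ?_⟩
  obtain ⟨n, hn, g3⟩ := g3
  exact ⟨n, hn, by rw [OutLE_flip, InLE_flip]; tauto⟩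


section Escape

variable {V : Type*} {G : SimpleGraph V} {B : Set V}

lemma contract_exact {v w : V} (h : Quotient.mk (contractSetoid B) v = Quotient.mk (contractSetoid B) w) :
    v = w ∨ (v ∈ B ∧ w ∈ B) :=
  Quotient.exact h

lemma lift_walk {x b : V} (hx : x ∉ B) (hb : b ∈ B) :
    ∀ {α : Quotient (contractSetoid B)}
      (q : (contractGraph G B).Walk α (Quotient.mk (contractSetoid B) b)),
      s(Quotient.mk (contractSetoid B) x, Quotient.mk (contractSetoid B) b) ∉ q.edges →
      ∀ v, v ∉ B → Quotient.mk (contractSetoid B) v = α →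
      ∃ c ∈ B, ∃ W : G.Walk v c, s(x, b) ∉ W.edges
  | _, SimpleGraph.Walk.nil, _, v, hv, hmk => by
    rcases contract_exact hmk with rfl | ⟨h1, _⟩
    · exact absurd hb hv
    · exact absurd h1 hv
  | _, SimpleGraph.Walk.cons h q, hq, v, hv, hmk => by
    rw [SimpleGraph.Walk.edges_cons, List.mem_cons] at hq
    push_neg at hq
    obtain ⟨hqe, hq'⟩ := hq
    obtain ⟨hne, x₁, y₁, hx₁, hy₁, hadj⟩ := h
    have hx₁v : x₁ = v := by
      rcases contract_exact (hx₁.trans hmk.symm) with h' | ⟨_, h'⟩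
      · exact h'
      · exact absurd h' hv
    subst hx₁v
    by_cases hy₁B : y₁ ∈ B
    · refine ⟨y₁, hy₁B, SimpleGraph.Walk.cons hadj SimpleGraph.Walk.nil, ?_⟩
      rw [SimpleGraph.Walk.edges_cons, List.mem_cons]
      push_neg
      refine ⟨?_, by simp⟩
      intro hEq
      rcases Sym2.eq_iff.mp hEq with ⟨rfl, rfl⟩ | ⟨rfl, rfl⟩
      · exact hqe (by rw [← hmk, ← hy₁])
      · exact hv hb
    · obtain ⟨c, hc, W, hW⟩ := lift_walk hx hb q hq' y₁ hy₁B hy₁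
      refine ⟨c, hc, SimpleGraph.Walk.cons hadj W, ?_⟩
      rw [SimpleGraph.Walk.edges_cons, List.mem_cons]
      push_neg
      refine ⟨?_, hW⟩
      intro hEq
      rcases Sym2.eq_iff.mp hEq with ⟨rfl, rfl⟩ | ⟨rfl, rfl⟩
      · exact hy₁B hb
      · exact hv hb

lemma exists_escape (h2ec : TwoEdgeConnected (contractGraph G B))
    {x b : V} (hx : x ∉ B) (hb : b ∈ B) (hxb : G.Adj x b) :
    ∃ c ∈ B, ∃ W : G.Walk x c, s(x, b) ∉ W.edges ∧ 1 ≤ W.length := by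
  classical
  set mk : V → Quotient (contractSetoid B) := Quotient.mk (contractSetoid B) with hmkdef
  have hAdj : (contractGraph G B).Adj (mk x) (mk b) := by
    refine ⟨?_, x, b, rfl, rfl, hxb⟩
    intro hEq
    rcases contract_exact hEq with rfl | ⟨h', _⟩
    · exact hx hb
    · exact hx h'
  have hnb := h2ec.2 s(mk x, mk b)
  rw [SimpleGraph.isBridge_iff_adj_and_forall_walk_mem_edges] at hnb
  push_neg at hnb
  obtain ⟨q, hq⟩ := hnb
  obtain ⟨c, hc, W, hW⟩ := lift_walk hx hb q hq x hx rfl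
  refine ⟨c, hc, W, hW, ?_⟩
  by_contra hlen
  have h0 : W.length = 0 := by omega
  have := SimpleGraph.Walk.eq_of_length_eq_zero h0
  exact hx (this ▸ hc)

end Escape


section Ear

variable {V : Type*} {G : SimpleGraph V} {B : Set V} {k : ℕ}

def IsEar (G : SimpleGraph V) (B : Set V) (D : V → V → Prop) (x b z : V)
    (p : G.Walk x z) (dir : Bool) (n : ℕ) : Prop :=
  p.IsPath ∧ s(x,b) ∉ p.edges ∧ (∀ v ∈ p.support, v = z ∨ ¬ SpD B D v) ∧ 1 ≤ p.length ∧
  n ≤ dB G B z ∧ (if dir then OutLE B D z n else InLE B D z n)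

def CostSet (G : SimpleGraph V) (B : Set V) (D : V → V → Prop) (x b : V) : Set ℕ :=
  {c | ∃ (z : V) (p : G.Walk x z) (dir : Bool) (n : ℕ),
    IsEar G B D x b z p dir n ∧ c = p.length + 1 + n}

lemma cost_le_raw {D : V → V → Prop} {x b z : V} (q : G.Walk x z)
    (hfree : s(x,b) ∉ q.edges)
    (hsup : ∀ v ∈ q.support, v = z ∨ ¬ SpD B D v) (hxz : x ≠ z)
    (dir : Bool) (n : ℕ) (hn : n ≤ dB G B z)
    (hcert : if dir then OutLE B D z n else InLE B D z n) :
    ∃ c ∈ CostSet G B D x b, c ≤ q.length + 1 + n := by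
  classical
  refine ⟨q.bypass.length + 1 + n, ⟨z, q.bypass, dir, n, ?_, rfl⟩, by
    have := SimpleGraph.Walk.length_bypass_le q; omega⟩
  refine ⟨SimpleGraph.Walk.bypass_isPath q,
    fun h => hfree (SimpleGraph.Walk.edges_bypass_subset q h),
    fun v hv => hsup v (SimpleGraph.Walk.support_bypass_subset q hv), ?_, hn, hcert⟩
  by_contra hlen
  have h0 : q.bypass.length = 0 := by omega
  exact hxz (SimpleGraph.Walk.eq_of_length_eq_zero h0)

lemma IsEar_flip {D : V → V → Prop} {x b z : V} {p : G.Walk x z} {dir : Bool} {n : ℕ} :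
    IsEar G B (flipD D) x b z p dir n ↔ IsEar G B D x b z p (!dir) n := by
  unfold IsEar
  have hs : (∀ v ∈ p.support, v = z ∨ ¬ SpD B (flipD D) v) ↔
      (∀ v ∈ p.support, v = z ∨ ¬ SpD B D v) := by
    constructor
    · intro h v hv
      rcases h v hv with h' | h'
      · exact Or.inl h'
      · exact Or.inr (fun hc => h' (SpD_flip.mpr hc))
    · intro h v hv
      rcases h v hv with h' | h'
      · exact Or.inl h'
      · exact Or.inr (fun hc => h' (SpD_flip.mp hc))
  rw [hs]
  cases dir with
  | true => simp [OutLE_flip, InLE_flip]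
  | false => simp [OutLE_flip, InLE_flip]

lemma CostSet_flip {D : V → V → Prop} {x b : V} :
    CostSet G B (flipD D) x b = CostSet G B D x b := by
  ext c
  constructor
  · rintro ⟨z, p, dir, n, hEar, rfl⟩
    exact ⟨z, p, !dir, n, IsEar_flip.mp hEar, rfl⟩
  · rintro ⟨z, p, dir, n, hEar, rfl⟩
    refine ⟨z, p, !dir, n, ?_, rfl⟩
    rw [IsEar_flip, Bool.not_not]
    exact hEar

lemma surg (dom : KStepDom G B k) {D : V → V → Prop} (hG : GoodD G B k D)
    {x b z : V} (hb : b ∈ B) (hx : ¬ SpD B D x)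
    {p : G.Walk x z} {n : ℕ}
    (hEar : IsEar G B D x b z p true n)
    (hmin : ∀ c ∈ CostSet G B D x b, p.length + 1 + n ≤ c)
    {w : V} (p₁ : G.Walk x w) (p₂ : G.Walk w z) (hsplit : p = p₁.append p₂)
    (h1 : 1 ≤ p₁.length) (h2 : 1 ≤ p₂.length) :
    p.length + 1 + n ≤ p₁.length + 1 + dB G B w ∨ p₁.length + 1 ≤ dB G B w := by
  classical
  obtain ⟨hppath, hpfree, hpsup, hp1, hnz, hcert⟩ := hEar
  rw [if_pos rfl] at hcert
  have hxB : x ∉ B := fun h => hx (Or.inl h)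
  have hp' : (p₁.append p₂).IsPath := hsplit ▸ hppath
  have hp₁ : p₁.IsPath := hp'.of_append_left
  have hp₂ : p₂.IsPath := hp'.of_append_right
  have hlen : p₁.length + p₂.length = p.length := by
    rw [hsplit, SimpleGraph.Walk.length_append]
  -- x ≠ w
  have hxw : x ≠ w := by
    intro hEq
    have := path_getVert_inj p₁ hp₁ 0 (by omega) p₁.length le_rfl
      (by rw [SimpleGraph.Walk.getVert_zero, SimpleGraph.Walk.getVert_length, hEq])
    omega
  -- w ≠ z
  have hwz : w ≠ z := by
    intro hEq
    have := path_getVert_inj p₂ hp₂ 0 (by omega) p₂.length le_rfl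
      (by rw [SimpleGraph.Walk.getVert_zero, SimpleGraph.Walk.getVert_length, hEq])
    omega
  -- z ∉ p₁.support
  have hzp₁ : z ∉ p₁.support := by
    intro hzmem
    have hnodup : (p₁.append p₂).support.Nodup := by
      rw [← hsplit]; exact hppath.2
    rw [SimpleGraph.Walk.support_append] at hnodup
    have hdisj := List.disjoint_of_nodup_append hnodup
    have hz2 : z ∈ p₂.support.tail := by
      have hz2' : z ∈ p₂.support := SimpleGraph.Walk.end_mem_support p₂
      rw [SimpleGraph.Walk.support_eq_cons] at hz2'
      rcases List.mem_cons.mp hz2' with h' | h'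
      · exact absurd h'.symm hwz
      · exact h'
    exact hdisj hzmem hz2
  -- w not special
  have hwmem : w ∈ p.support := by
    rw [hsplit, SimpleGraph.Walk.mem_support_append_iff]
    exact Or.inl (SimpleGraph.Walk.end_mem_support p₁)
  have hwSp : ¬ SpD B D w := by
    rcases hpsup w hwmem with h' | h'
    · exact absurd h' hwz
    · exact h'
  -- the shortest-to-B walk from w
  obtain ⟨c₀, hc₀, σ, hσ⟩ := dB_walk dom w
  obtain ⟨d, σ₁, σ₂, hσeq, hQd, hσ₁sup⟩ :=
    exists_first (fun v => SpD B D v ∨ v = x) σ (Or.inl (Or.inl hc₀))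
  have hσlen : σ₁.length + σ₂.length = σ.length := by
    rw [hσeq, SimpleGraph.Walk.length_append]
  by_cases hdx : d = x
  · -- right branch
    right
    have hσ₂pos : 1 ≤ σ₂.length := by
      by_contra hc
      have h0 : σ₂.length = 0 := by omega
      have h1' := SimpleGraph.Walk.eq_of_length_eq_zero h0
      rw [hdx] at h1'
      exact hxB (h1' ▸ hc₀)
    set σx : G.Walk w x := σ₁.copy rfl hdx with hσx
    have hσxsup : σx.support = σ₁.support := SimpleGraph.Walk.support_copy σ₁ rfl hdx
    have hσxedg : σx.edges = σ₁.edges := SimpleGraph.Walk.edges_copy σ₁ rfl hdx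
    have hσxlen : σx.length = σ₁.length := SimpleGraph.Walk.length_copy σ₁ rfl hdx
    -- candidate q := σx.reverse.append p₂
    have hfree' : s(x,b) ∉ (σx.reverse.append p₂).edges := by
      rw [SimpleGraph.Walk.edges_append, List.mem_append]
      push_neg
      constructor
      · intro hmem
        rw [SimpleGraph.Walk.edges_reverse, List.mem_reverse, hσxedg] at hmem
        have hbmem : b ∈ σ₁.support := SimpleGraph.Walk.snd_mem_support_of_mem_edges σ₁ hmem
        rcases hσ₁sup b hbmem with h' | h'
        · rw [h', hdx] at hb
          exact hxB hb
        · exact h' (Or.inl (Or.inl hb))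
      · intro hmem
        apply hpfree
        rw [hsplit, SimpleGraph.Walk.edges_append, List.mem_append]
        exact Or.inr hmem
    have hsup' : ∀ v ∈ (σx.reverse.append p₂).support, v = z ∨ ¬ SpD B D v := by
      intro v hv
      rw [SimpleGraph.Walk.mem_support_append_iff] at hv
      rcases hv with hv | hv
      · rw [SimpleGraph.Walk.support_reverse, List.mem_reverse, hσxsup] at hv
        rcases hσ₁sup v hv with h' | h'
        · refine Or.inr ?_
          rw [h', hdx]
          exact hx
        · push_neg at h'
          exact Or.inr h'.1
      · have hv' : v ∈ p.support := by
          rw [hsplit, SimpleGraph.Walk.mem_support_append_iff]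
          exact Or.inr hv
        exact hpsup v hv'
    have hxz : x ≠ z := by
      intro hEq
      exact hx (hEq ▸ cert_Sp (Or.inl hcert))
    obtain ⟨c, hcmem, hcle⟩ := cost_le_raw (B := B) (σx.reverse.append p₂) hfree' hsup' hxz
      true n hnz (by rw [if_pos rfl]; exact hcert)
    have hfin := hmin c hcmem
    rw [SimpleGraph.Walk.length_append, SimpleGraph.Walk.length_reverse, hσxlen] at hcle
    omega
  · -- left branch
    have hSpd : SpD B D d := by
      rcases hQd with h' | h'
      · exact h'
      · exact absurd h' hdx
    left
    -- candidate q := p₁.append σ₁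
    have hfree' : s(x,b) ∉ (p₁.append σ₁).edges := by
      rw [SimpleGraph.Walk.edges_append, List.mem_append]
      push_neg
      constructor
      · intro hmem
        apply hpfree
        rw [hsplit, SimpleGraph.Walk.edges_append, List.mem_append]
        exact Or.inl hmem
      · intro hmem
        have hxmem : x ∈ σ₁.support := SimpleGraph.Walk.fst_mem_support_of_mem_edges σ₁ hmem
        rcases hσ₁sup x hxmem with h' | h'
        · exact hdx h'.symm
        · exact h' (Or.inr rfl)
    have hsup' : ∀ v ∈ (p₁.append σ₁).support, v = d ∨ ¬ SpD B D v := by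
      intro v hv
      rw [SimpleGraph.Walk.mem_support_append_iff] at hv
      rcases hv with hv | hv
      · have hv' : v ∈ p.support := by
          rw [hsplit, SimpleGraph.Walk.mem_support_append_iff]
          exact Or.inl hv
        rcases hpsup v hv' with h' | h'
        · exact absurd (h' ▸ hv) hzp₁
        · exact Or.inr h'
      · rcases hσ₁sup v hv with h' | h'
        · exact Or.inl h'
        · push_neg at h'
          exact Or.inr h'.1
    have hxd : x ≠ d := fun h => hdx h.symm
    have hdB : dB G B d ≤ σ₂.length := dB_le_of_walk hc₀ σ₂
    -- certificate for d
    have hcert' : ∃ (dir : Bool) (n' : ℕ), n' ≤ dB G B d ∧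
        (if dir then OutLE B D d n' else InLE B D d n') := by
      rcases hSpd with hdB' | hdEp
      · exact ⟨true, 0, Nat.zero_le _, by rw [if_pos rfl]; exact ⟨d, hdB', dip_refl d⟩⟩
      · obtain ⟨-, -, n', hn', hOI⟩ := hG.2.2.2 d hdEp
        rcases hOI with hO | hI
        · exact ⟨true, n', hn', by rw [if_pos rfl]; exact hO⟩
        · exact ⟨false, n', hn', by simp; exact hI⟩
    obtain ⟨dir', n', hn', hcrt⟩ := hcert'
    obtain ⟨c, hcmem, hcle⟩ := cost_le_raw (B := B) (p₁.append σ₁) hfree' hsup' hxd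
      dir' n' hn' hcrt
    have := hmin c hcmem
    rw [SimpleGraph.Walk.length_append] at hcle
    omega

lemma cst_le (dom : KStepDom G B k) (hk : 1 ≤ k) {D : V → V → Prop} (hG : GoodD G B k D)
    {x b z : V} (hb : b ∈ B) (hx : ¬ SpD B D x)
    {p : G.Walk x z} {n : ℕ}
    (hEar : IsEar G B D x b z p true n)
    (hmin : ∀ c ∈ CostSet G B D x b, p.length + 1 + n ≤ c) :
    p.length + 1 + n ≤ 2*k + 1 := by
  have hzdB : n ≤ dB G B z := hEar.2.2.2.2.1
  have hzk : dB G B z ≤ k := dB_le_k dom z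
  by_cases hpk : p.length ≤ k
  · omega
  · obtain ⟨y, p₁, p₂, hsp, hl⟩ := exists_split p k (by omega)
    have hlen : p₁.length + p₂.length = p.length := by
      rw [hsp, SimpleGraph.Walk.length_append]
    rcases surg dom hG hb hx hEar hmin p₁ p₂ hsp (by omega) (by omega) with h | h
    · have := dB_le_k dom y
      omega
    · have := dB_le_k dom y
      omega

lemma first_edge {a c : V} (q : G.Walk a c) (h : 1 ≤ q.length) :
    s(a, q.getVert 1) ∈ q.edges := by
  cases q with
  | nil => simp at h
  | cons h' q' =>
    rw [SimpleGraph.Walk.edges_cons]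
    have hg : (SimpleGraph.Walk.cons h' q').getVert 1 = q'.getVert 0 :=
      SimpleGraph.Walk.getVert_cons_succ q' h'
    rw [hg, SimpleGraph.Walk.getVert_zero]
    exact List.mem_cons_self

lemma buildFwd (dom : KStepDom G B k) (hk : 1 ≤ k) {D : V → V → Prop} (hG : GoodD G B k D)
    {x b z : V} (hb : b ∈ B) (hxb : G.Adj x b) (hx : ¬ SpD B D x)
    {p : G.Walk x z} {n : ℕ}
    (hEar : IsEar G B D x b z p true n)
    (hmin : ∀ c ∈ CostSet G B D x b, p.length + 1 + n ≤ c) :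
    ∃ D' : V → V → Prop, GoodD G B k D' ∧ (∀ a₁ a₂, D a₁ a₂ → D' a₁ a₂) ∧ EpD D' x := by
  classical
  have hCst : p.length + 1 + n ≤ 2*k + 1 := cst_le dom hk hG hb hx hEar hmin
  obtain ⟨hppath, hpfree, hpsup, hp1, hnz, hcert⟩ := hEar
  rw [if_pos rfl] at hcert
  have hxB : x ∉ B := fun h => hx (Or.inl h)
  set E : G.Walk b z := SimpleGraph.Walk.cons hxb.symm p with hE
  have hElen : E.length = p.length + 1 := by rw [hE, SimpleGraph.Walk.length_cons]
  have hgE0 : E.getVert 0 = b := SimpleGraph.Walk.getVert_zero E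
  have hgEs : ∀ i, E.getVert (i+1) = p.getVert i := fun i =>
    SimpleGraph.Walk.getVert_cons_succ p hxb.symm
  have hgEz : E.getVert E.length = z := SimpleGraph.Walk.getVert_length E
  have hgE1 : E.getVert 1 = x := by rw [hgEs 0, SimpleGraph.Walk.getVert_zero]
  -- injectivity of E.getVert up to the endpoints
  have hbz : ∀ j' ≤ p.length, b = p.getVert j' → j' = p.length := by
    intro j' hj' hEq
    have hbmem : b ∈ p.support := hEq ▸ getVert_mem hj'
    have hbz' : b = z := by
      rcases hpsup b hbmem with h' | h'
      · exact h'
      · exact absurd (Or.inl hb) h'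
    exact path_getVert_inj p hppath j' hj' p.length le_rfl
      (by rw [← hEq, hbz', SimpleGraph.Walk.getVert_length])
  have hEinj : ∀ i ≤ E.length, ∀ j ≤ E.length, E.getVert i = E.getVert j →
      i = j ∨ (i = 0 ∧ j = E.length) ∨ (i = E.length ∧ j = 0) := by
    intro i hi j hj hEq
    match i, j with
    | 0, 0 => exact Or.inl rfl
    | 0, (j'+1) =>
      rw [hgE0, hgEs j'] at hEq
      have := hbz j' (by omega) hEq
      exact Or.inr (Or.inl ⟨rfl, by omega⟩)
    | (i'+1), 0 =>
      rw [hgE0, hgEs i'] at hEq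
      have := hbz i' (by omega) hEq.symm
      exact Or.inr (Or.inr ⟨by omega, rfl⟩)
    | (i'+1), (j'+1) =>
      rw [hgEs i', hgEs j'] at hEq
      have := path_getVert_inj p hppath i' (by omega) j' (by omega) hEq
      exact Or.inl (by omega)
  -- no length-1 ear back to b
  have hshort : ¬ (p.length = 1 ∧ b = z) := by
    rintro ⟨hl1, hbz'⟩
    apply hpfree
    have h1e := first_edge p hp1
    have hz1 : p.getVert 1 = z := by
      conv_lhs => rw [← hl1]
      exact SimpleGraph.Walk.getVert_length p
    rw [hz1] at h1e
    rw [hbz']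
    exact h1e
  -- interior vertices of E are not special
  have hint : ∀ i, 1 ≤ i → i ≤ p.length → ¬ SpD B D (E.getVert i) := by
    intro i h1i h2i
    obtain ⟨i', rfl⟩ : ∃ i', i = i' + 1 := ⟨i - 1, by omega⟩
    rw [hgEs i']
    have hmem : p.getVert i' ∈ p.support := getVert_mem (by omega)
    rcases hpsup _ hmem with h' | h'
    · exfalso
      have := path_getVert_inj p hppath i' (by omega) p.length le_rfl
        (by rw [h', SimpleGraph.Walk.getVert_length])
      omega
    · exact h'
  -- the new digraph
  set D' : V → V → Prop := fun a₁ a₂ => D a₁ a₂ ∨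
    ∃ i, i < E.length ∧ a₁ = E.getVert i ∧ a₂ = E.getVert (i+1) with hD'
  have hmono : ∀ a₁ a₂, D a₁ a₂ → D' a₁ a₂ := fun _ _ h => Or.inl h
  have hInMono : ∀ v m, InLE B D v m → InLE B D' v m := by
    rintro v m ⟨c, hc, hd⟩
    exact ⟨c, hc, dip_mono_D hmono hd⟩
  have hOutMono : ∀ v m, OutLE B D v m → OutLE B D' v m := by
    rintro v m ⟨c, hc, hd⟩
    exact ⟨c, hc, dip_mono_D hmono hd⟩
  -- directed paths along E
  have hpre : ∀ i, i ≤ E.length → DiPathLE D' b (E.getVert i) i := by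
    intro i hi
    exact ⟨i, le_rfl, E.getVert, hgE0, rfl, fun r hr => Or.inr ⟨r, by omega, rfl, rfl⟩⟩
  have hsuf : ∀ i, i ≤ E.length → DiPathLE D' (E.getVert i) z (E.length - i) := by
    intro i hi
    refine ⟨E.length - i, le_rfl, fun r => E.getVert (i + r), by simp, ?_, ?_⟩
    · show E.getVert (i + (E.length - i)) = z
      have h' : i + (E.length - i) = E.length := by omega
      rw [h', hgEz]
    · intro r hr
      exact Or.inr ⟨i + r, by omega, rfl, rfl⟩
  have hin_i : ∀ i, i ≤ E.length → InLE B D' (E.getVert i) i := fun i hi => ⟨b, hb, hpre i hi⟩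
  have hout_i : ∀ i, i ≤ E.length → OutLE B D' (E.getVert i) (E.length - i + n) := by
    intro i hi
    obtain ⟨c₁, hc₁, hd₁⟩ := hcert
    exact ⟨c₁, hc₁, dip_trans (hsuf i hi) (dip_mono_D hmono hd₁)⟩
  -- characterization of the new endpoints
  have hEp' : ∀ v, EpD D' v → EpD D v ∨ ∃ i, i ≤ E.length ∧ v = E.getVert i := by
    rintro v ⟨w', hw' | hw'⟩
    · rcases hw' with h' | ⟨i, hi, h₁, h₂⟩
      · exact Or.inl ⟨w', Or.inl h'⟩
      · exact Or.inr ⟨i, by omega, h₁⟩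
    · rcases hw' with h' | ⟨i, hi, h₁, h₂⟩
      · exact Or.inl ⟨w', Or.inr h'⟩
      · exact Or.inr ⟨i+1, by omega, h₂⟩
  refine ⟨D', ⟨?_, ?_, ?_, ?_⟩, hmono, ?_⟩
  · -- adjacency
    rintro u v (h | ⟨i, hi, rfl, rfl⟩)
    · exact hG.1 u v h
    · exact E.adj_getVert_succ hi
  · -- not both in B
    rintro u v (h | ⟨i, hi, rfl, rfl⟩)
    · exact hG.2.1 u v h
    · rintro ⟨huB, hvB⟩
      by_cases hi0 : i = 0
      · subst hi0
        rw [hgE1] at hvB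
        exact hxB hvB
      · exact hint i (by omega) (by omega) (Or.inl huB)
  · -- antisymmetry
    rintro u v huv hvu
    rcases huv with hOld | ⟨i, hi, rfl, rfl⟩
    · rcases hvu with hOld' | ⟨j, hj, hv1, hv2⟩
      · exact hG.2.2.1 u v hOld hOld'
      · -- v = gV j, u = gV (j+1), D u v
        have hEpu : SpD B D u := Or.inr ⟨v, Or.inl hOld⟩
        have hEpv : SpD B D v := Or.inr ⟨u, Or.inr hOld⟩
        by_cases hj0 : j = 0
        · subst hj0
          rw [hgE1] at hv2
          exact hx (hv2 ▸ hEpu)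
        · exact hint j (by omega) (by omega) (hv1 ▸ hEpv)
    · rcases hvu with hOld' | ⟨j, hj, hv1, hv2⟩
      · -- D v u old with u = gV i, v = gV (i+1)
        have hEpu : SpD B D (E.getVert i) := Or.inr ⟨E.getVert (i+1), Or.inr hOld'⟩
        have hEpv : SpD B D (E.getVert (i+1)) := Or.inr ⟨E.getVert i, Or.inl hOld'⟩
        by_cases hi0 : i = 0
        · subst hi0
          rw [hgE1] at hEpv
          exact hx hEpv
        · exact hint i (by omega) (by omega) hEpu
      · -- both new
        have hA := hEinj (i+1) (by omega) j (by omega) hv1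
        have hB := hEinj i (by omega) (j+1) (by omega) hv2
        rcases hA with hA | hA | hA
        · rcases hB with hB | hB | hB
          · omega
          · -- i = 0, j+1 = E.length, i+1 = j
            apply hshort
            have h0 : E.getVert 0 = E.getVert E.length := by
              conv_lhs => rw [← hB.1]
              conv_rhs => rw [← hB.2]
              exact hv2
            rw [hgE0, hgEz] at h0
            exact ⟨by omega, h0⟩
          · omega
        · rcases hB with hB | hB | hB
          · -- i+1 = 0 impossible
            omega
          · omega
          · omega
        · -- i+1 = E.length ∧ j = 0
          rcases hB with hB | hB | hB
          · -- i = j+1 = 1, len = 2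
            apply hshort
            have h0 : E.getVert E.length = E.getVert 0 := by
              conv_lhs => rw [← hA.1]
              conv_rhs => rw [← hA.2]
              exact hv1
            rw [hgEz, hgE0] at h0
            exact ⟨by omega, h0.symm⟩
          · omega
          · omega
  · -- the invariant
    intro v hv
    rcases hEp' v hv with hvold | ⟨i, hi, rfl⟩
    · obtain ⟨g1, g2, g3⟩ := hG.2.2.2 v hvold
      obtain ⟨n', hn', hOI⟩ := g3
      exact ⟨hInMono _ _ g1, hOutMono _ _ g2, n', hn',
        hOI.imp (hOutMono _ _) (hInMono _ _)⟩
    · by_cases hi0 : i = 0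
      · subst hi0
        have hb0 : InLE B D' (E.getVert 0) 0 := ⟨b, hb, by rw [hgE0]; exact dip_refl b⟩
        have hb0' : OutLE B D' (E.getVert 0) 0 := ⟨b, hb, by rw [hgE0]; exact dip_refl b⟩
        exact ⟨⟨b, hb, dip_mono_n (by rw [hgE0]; exact dip_refl b) (by omega)⟩,
          ⟨b, hb, dip_mono_n (by rw [hgE0]; exact dip_refl b) (by omega)⟩,
          0, Nat.zero_le _, Or.inl hb0'⟩
      · by_cases hil : i = E.length
        · subst hil
          have hzSp : SpD B D z := cert_Sp (Or.inl hcert)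
          rcases hzSp with hzB | hzEp
          · refine ⟨⟨z, hzB, dip_mono_n (by rw [hgEz]; exact dip_refl z) (by omega)⟩,
              ⟨z, hzB, dip_mono_n (by rw [hgEz]; exact dip_refl z) (by omega)⟩,
              0, Nat.zero_le _, Or.inl ⟨z, hzB, by rw [hgEz]; exact dip_refl z⟩⟩
          · obtain ⟨g1, g2, g3⟩ := hG.2.2.2 z hzEp
            obtain ⟨n', hn', hOI⟩ := g3
            rw [hgEz]
            exact ⟨hInMono _ _ g1, hOutMono _ _ g2, n', hn',
              hOI.imp (hOutMono _ _) (hInMono _ _)⟩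
        · -- interior
          have hi1 : 1 ≤ i := by omega
          have hip : i ≤ p.length := by omega
          have hIn2k : InLE B D' (E.getVert i) (2*k) :=
            ⟨b, hb, dip_mono_n (hpre i (by omega)) (by omega)⟩
          have hOut2k : OutLE B D' (E.getVert i) (2*k) := by
            obtain ⟨c₁, hc₁, hd₁⟩ := hout_i i (by omega)
            exact ⟨c₁, hc₁, dip_mono_n hd₁ (by omega)⟩
          refine ⟨hIn2k, hOut2k, ?_⟩
          by_cases hi1' : i = 1
          · subst hi1'
            refine ⟨1, ?_, Or.inr (hin_i 1 (by omega))⟩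
            rw [hgE1]
            exact dB_pos dom hxB
          · -- i ≥ 2 : use the surgery
            obtain ⟨y, p₁, p₂, hsp, hl⟩ := exists_split p (i-1) (by omega)
            have hlen2 : p₁.length + p₂.length = p.length := by
              rw [hsp, SimpleGraph.Walk.length_append]
            have hyv : E.getVert i = y := by
              have h₁ : p.getVert (i-1) = y := by
                rw [hsp, SimpleGraph.Walk.getVert_append, if_neg (by omega), hl, Nat.sub_self,
                  SimpleGraph.Walk.getVert_zero]
              obtain ⟨i', rfl⟩ : ∃ i', i = i' + 1 := ⟨i - 1, by omega⟩
              rw [hgEs i']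
              rw [show i' + 1 - 1 = i' from rfl] at h₁
              exact h₁
            have hsurg := surg dom hG hb hx
              (⟨hppath, hpfree, hpsup, hp1, hnz, by rw [if_pos rfl]; exact hcert⟩ :
                IsEar G B D x b z p true n) hmin p₁ p₂ hsp (by omega) (by omega)
            rcases hsurg with hL | hR
            · refine ⟨E.length - i + n, ?_, Or.inl (hout_i i (by omega))⟩
              rw [hyv]
              omega
            · refine ⟨i, ?_, Or.inr (hin_i i (by omega))⟩
              rw [hyv]
              omega
  · -- x is an endpoint of D'
    exact ⟨b, Or.inr (Or.inr ⟨0, by omega, hgE0.symm, hgE1.symm⟩)⟩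

def Covered (G : SimpleGraph V) (B : Set V) (k : ℕ) (D : V → V → Prop) (u : V) : Prop :=
  ∃ s, SpD B D s ∧ ∃ w : G.Walk u s, w.length ≤ k - 1

lemma step (dom : KStepDom G B k) (hk : 1 ≤ k)
    (h2ec : TwoEdgeConnected (contractGraph G B))
    {D : V → V → Prop} (hG : GoodD G B k D) {u : V} (hu : ¬ Covered G B k D u) :
    ∃ D', GoodD G B k D' ∧ (∀ a₁ a₂, D a₁ a₂ → D' a₁ a₂) ∧
      ∃ x, ¬ SpD B D x ∧ EpD D' x := by
  classical
  have hnotsp : ∀ v, (∃ w : G.Walk u v, w.length ≤ k-1) → ¬ SpD B D v :=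
    fun v ⟨w, hw⟩ hsp => hu ⟨v, hsp, w, hw⟩
  obtain ⟨c₀, hc₀, W, hW⟩ := dom u
  have huB : u ∉ B := fun h => hu ⟨u, Or.inl h, SimpleGraph.Walk.nil, by simp⟩
  have hW1 : 1 ≤ W.length := by
    by_contra hc
    have h0 : W.length = 0 := by omega
    exact huB ((SimpleGraph.Walk.eq_of_length_eq_zero h0) ▸ hc₀)
  obtain ⟨x, W₁, hxb, hlen⟩ := exists_penult W hW1
  have hxSp : ¬ SpD B D x := hnotsp x ⟨W₁, by omega⟩
  have hxB : x ∉ B := fun h => hxSp (Or.inl h)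
  -- nonemptiness of the cost set
  obtain ⟨c', hc', Wesc, hfree, hlen'⟩ := exists_escape h2ec hxB hc₀ hxb
  obtain ⟨d, q₁, q₂, hqeq, hSpd, hq₁sup⟩ := exists_first (SpD B D) Wesc (Or.inl hc')
  have hxd : x ≠ d := fun h => hxSp (h ▸ hSpd)
  have hfree₁ : s(x, c₀) ∉ q₁.edges := by
    intro hmem
    apply hfree
    rw [hqeq, SimpleGraph.Walk.edges_append, List.mem_append]
    exact Or.inl hmem
  have hcert' : ∃ (dir : Bool) (n' : ℕ), n' ≤ dB G B d ∧
      (if dir then OutLE B D d n' else InLE B D d n') := by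
    rcases hSpd with hdB' | hdEp
    · exact ⟨true, 0, Nat.zero_le _, by rw [if_pos rfl]; exact ⟨d, hdB', dip_refl d⟩⟩
    · obtain ⟨-, -, n', hn', hOI⟩ := hG.2.2.2 d hdEp
      rcases hOI with hO | hI
      · exact ⟨true, n', hn', by rw [if_pos rfl]; exact hO⟩
      · exact ⟨false, n', hn', by simp; exact hI⟩
  obtain ⟨dir', n', hn', hcrt⟩ := hcert'
  obtain ⟨c, hcmem, -⟩ := cost_le_raw (B := B) q₁ hfree₁ hq₁sup hxd dir' n' hn' hcrt
  -- the minimal ear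
  have hne : (CostSet G B D x c₀).Nonempty := ⟨c, hcmem⟩
  obtain ⟨z, p, dir, n, hEar, hCeq⟩ := Nat.sInf_mem hne
  have hmin : ∀ c'' ∈ CostSet G B D x c₀, p.length + 1 + n ≤ c'' :=
    fun c'' hc'' => hCeq ▸ Nat.sInf_le hc''
  cases dir with
  | true =>
    obtain ⟨D', hG', hmono, hEp⟩ := buildFwd dom hk hG hc₀ hxb hxSp hEar hmin
    exact ⟨D', hG', hmono, x, hxSp, hEp⟩
  | false =>
    have hG2 : GoodD G B k (flipD D) := GoodD_flip hG
    have hx2 : ¬ SpD B (flipD D) x := fun h => hxSp (SpD_flip.mp h)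
    have hEar2 : IsEar G B (flipD D) x c₀ z p true n := by
      rw [IsEar_flip]
      simpa using hEar
    have hmin2 : ∀ c'' ∈ CostSet G B (flipD D) x c₀, p.length + 1 + n ≤ c'' := by
      rw [CostSet_flip]
      exact hmin
    obtain ⟨D₂, hG₂, hmono₂, hEp₂⟩ := buildFwd dom hk hG2 hc₀ hxb hx2 hEar2 hmin2
    refine ⟨flipD D₂, GoodD_flip hG₂, fun a₁ a₂ h => hmono₂ a₂ a₁ h, x, hxSp, ?_⟩
    exact EpD_flip.mpr hEp₂

lemma Sp_mono {D D' : V → V → Prop} (hmono : ∀ a₁ a₂, D a₁ a₂ → D' a₁ a₂) {v : V}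
    (h : SpD B D v) : SpD B D' v := by
  rcases h with h | ⟨w, h | h⟩
  · exact Or.inl h
  · exact Or.inr ⟨w, Or.inl (hmono _ _ h)⟩
  · exact Or.inr ⟨w, Or.inr (hmono _ _ h)⟩

lemma main_loop [Fintype V] (dom : KStepDom G B k) (hk : 1 ≤ k)
    (h2ec : TwoEdgeConnected (contractGraph G B)) :
    ∀ (m : ℕ) (D : V → V → Prop), GoodD G B k D → {v | ¬ SpD B D v}.ncard ≤ m →
    ∃ D', GoodD G B k D' ∧ ∀ u, Covered G B k D' u := by
  classical
  intro m
  induction m with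
  | zero =>
    intro D hG hcard
    refine ⟨D, hG, ?_⟩
    intro v
    by_contra hv
    have hvSp : ¬ SpD B D v := by
      intro hsp
      exact hv ⟨v, hsp, SimpleGraph.Walk.nil, by simp⟩
    have : v ∈ {v | ¬ SpD B D v} := hvSp
    have hpos : 0 < {v | ¬ SpD B D v}.ncard := by
      rw [Set.ncard_pos (Set.toFinite _)]
      exact ⟨v, this⟩
    omega
  | succ m ih =>
    intro D hG hcard
    by_cases hc : ∀ u, Covered G B k D u
    · exact ⟨D, hG, hc⟩
    · push_neg at hc
      obtain ⟨u, hu⟩ := hc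
      obtain ⟨D', hG', hmono, x, hxSp, hxEp⟩ := step dom hk h2ec hG hu
      refine ih D' hG' ?_
      have hsub : {v | ¬ SpD B D' v} ⊂ {v | ¬ SpD B D v} := by
        constructor
        · intro v hv hsp
          exact hv (Sp_mono hmono hsp)
        · intro hcon
          have := hcon (show x ∈ {v | ¬ SpD B D v} from hxSp)
          exact this (Or.inr hxEp)
      have := Set.ncard_lt_ncard hsub (Set.toFinite _)
      omega

lemma GoodD_bot : GoodD G B k (fun _ _ => False) := by
  refine ⟨fun u v h => h.elim, fun u v h => h.elim, fun u v h => h.elim, ?_⟩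
  rintro v ⟨w, h | h⟩ <;> exact h.elim

end Ear

end CTaux

/-- **Chvátal–Thomassen Lemma.** -/
theorem chvatal_thomassen_lemma {V : Type*} [Fintype V]
    (G : SimpleGraph V) (k : ℕ) (hk : 1 ≤ k) (B : Set V)
    (hBdom : KStepDom G B k)
    (h2ec : TwoEdgeConnected (contractGraph G B)) :
    ∃ (S : Set V) (D : V → V → Prop),
      IsOrientedSubgraph G S D ∧
      (∀ u v, D u v → ¬(u ∈ B ∧ v ∈ B)) ∧
      KStepDom G S (k - 1) ∧
      ∀ v ∈ S,
        (∃ b ∈ B, DiPathLE D b v (2 * k)) ∧ (∃ b ∈ B, DiPathLE D v b (2 * k)) := by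
  classical
  obtain ⟨D, hG, hcov⟩ := CTaux.main_loop hBdom hk h2ec
    ({v | ¬ CTaux.SpD B (fun _ _ => False) v}.ncard) (fun _ _ => False)
    CTaux.GoodD_bot le_rfl
  refine ⟨{v | CTaux.SpD B D v}, D, ⟨?_, ?_⟩, hG.2.1, ?_, ?_⟩
  · intro u v h
    exact ⟨hG.1 u v h, Or.inr ⟨v, Or.inl h⟩, Or.inr ⟨u, Or.inr h⟩⟩
  · rintro u v ⟨h1, h2⟩
    exact hG.2.2.1 u v h1 h2
  · intro v
    obtain ⟨s, hsp, w, hw⟩ := hcov v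
    exact ⟨s, hsp, w, hw⟩
  · intro v hv
    rcases hv with hvB | hvEp
    · exact ⟨⟨v, hvB, CTaux.dip_mono_n (CTaux.dip_refl v) (by omega)⟩,
        ⟨v, hvB, CTaux.dip_mono_n (CTaux.dip_refl v) (by omega)⟩⟩
    · obtain ⟨g1, g2, -⟩ := hG.2.2.2 v hvEp
      obtain ⟨c1, hc1, hd1⟩ := g1
      obtain ⟨c2, hc2, hd2⟩ := g2
      exact ⟨⟨c1, hc1, hd1⟩, ⟨c2, hc2, hd2⟩⟩
end

section
/- Let G be a 2-edge connected graph of diameter d, let pq be an edge of G, let k be the length of a shortest cycle of G containing the edge pq, and let h = ⌊k/2⌋. If k ≥ 4, then there exists a strongly connected oriented subgraph →H of G with p, q ∈ V(→H) whose (directed) diameter is at most 6d − 2h − 3. -/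
namespace OCAux
open SimpleGraph

variable {V : Type*} {G : SimpleGraph V}

lemma exists_walk_to_getVert {u v : V} (w : G.Walk u v) (i : ℕ) :
    ∃ w1 : G.Walk u (w.getVert i), w1.length ≤ i := by
  induction w generalizing i with
  | nil => exact ⟨Walk.nil.copy rfl (by cases i <;> rfl), by simp⟩
  | cons h p ih =>
    cases i with
    | zero => exact ⟨Walk.nil.copy rfl (by simp), by simp⟩
    | succ n =>
      obtain ⟨w1, hw1⟩ := ih n
      exact ⟨(Walk.cons h w1).copy rfl (by simp [Walk.getVert_cons_succ]),
        by simpa using Nat.succ_le_succ hw1⟩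

lemma exists_walk_from_getVert {u v : V} (w : G.Walk u v) (i : ℕ) :
    ∃ w2 : G.Walk (w.getVert i) v, w2.length ≤ w.length - i := by
  induction w generalizing i with
  | nil => exact ⟨Walk.nil.copy (by cases i <;> rfl) rfl, by simp⟩
  | cons h p ih =>
    cases i with
    | zero =>
      exact ⟨(Walk.cons h p).copy (by simp) rfl, by simp⟩
    | succ n =>
      obtain ⟨w2, hw2⟩ := ih n
      exact ⟨w2.copy (by simp [Walk.getVert_cons_succ]) rfl, by
        simpa [Walk.length_cons] using hw2.trans (by omega)⟩

lemma cycle_length_le {d k : ℕ} {p q : V}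
    (hnb : ¬ G.IsBridge s(p, q)) (hconn : G.Connected) (hd : ∀ u v, G.dist u v ≤ d)
    (hpq : G.Adj p q)
    (hmin : ∀ (a : V) (c : G.Walk a a), c.IsCycle → s(p, q) ∈ c.edges → k ≤ c.length)
    (hk4 : 4 ≤ k) : k ≤ 2 * d + 1 := by
  classical
  set G' := G \ fromEdgeSet {s(p, q)} with hG'
  have hle : G' ≤ G := sdiff_le
  have hreach : G'.Reachable p q := by
    rw [isBridge_iff] at hnb
    push_neg at hnb
    exact hnb
  obtain ⟨P, hP⟩ := hreach.exists_walk_length_eq_dist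
  set L := G'.dist p q with hL
  have hPpath : P.IsPath := P.isPath_of_length_eq_dist hP
  -- build a cycle in G through pq from P
  have hinj : Function.Injective (Hom.ofLE hle) := fun a b h => h
  set Pg := P.map (Hom.ofLE hle) with hPg
  have hPg_len : Pg.length = L := by rw [hPg, Walk.length_map, hP]
  have hPg_path : Pg.IsPath := Walk.map_isPath_of_injective hinj hPpath
  have hedges_same : Pg.edges = P.edges := by
    rw [hPg, Walk.edges_map, show ⇑(Hom.ofLE hle) = id from rfl,
      Sym2.map_id, List.map_id]
  have hPg_edges : s(q, p) ∉ Pg.edges := by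
    intro hmem
    rw [hedges_same] at hmem
    have := P.edges_subset_edgeSet hmem
    rw [hG'] at this
    simp only [edgeSet_sdiff, edgeSet_fromEdgeSet, edgeSet_sdiff_sdiff_isDiag, Set.mem_diff,
      Set.mem_singleton_iff] at this
    exact this.2 (Sym2.eq_swap)
  have hcyc_cycle : (Walk.cons hpq.symm Pg).IsCycle :=
    (Walk.cons_isCycle_iff Pg hpq.symm).mpr ⟨hPg_path, hPg_edges⟩
  have hedge : s(p, q) ∈ (Walk.cons hpq.symm Pg).edges := by
    rw [Walk.edges_cons]
    exact List.mem_cons.mpr (Or.inl Sym2.eq_swap)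
  have hkL : k ≤ L + 1 := by
    have := hmin q (Walk.cons hpq.symm Pg) hcyc_cycle hedge
    simpa [Walk.length_cons, hPg_len] using this
  have hL3 : 3 ≤ L := by omega
  -- midpoint
  set x := P.getVert (L / 2) with hx
  obtain ⟨w1, hw1⟩ := exists_walk_to_getVert P (L / 2)
  obtain ⟨w2, hw2⟩ := exists_walk_from_getVert P (L / 2)
  have hd1 : G'.dist p x ≤ L / 2 := (dist_le w1).trans hw1
  rw [hP] at hw2
  have hd2 : G'.dist x q ≤ L - L / 2 := (dist_le w2).trans hw2
  have htri : L ≤ G'.dist p x + G'.dist x q := by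
    obtain ⟨W1, hW1⟩ := w1.reachable.exists_walk_length_eq_dist
    obtain ⟨W2, hW2⟩ := w2.reachable.exists_walk_length_eq_dist
    calc L = G'.dist p q := hL
      _ ≤ (W1.append W2).length := dist_le _
      _ = G'.dist p x + G'.dist x q := by rw [Walk.length_append, hW1, hW2]
  -- shortest q-x path in G
  obtain ⟨W, hWlen⟩ := (hconn.preconnected q x).exists_walk_length_eq_dist
  set Wb := W.bypass with hWb
  have hWb_path : Wb.IsPath := W.bypass_isPath
  have hWb_len : Wb.length ≤ d := (W.length_bypass_le).trans (by rw [hWlen]; exact hd q x)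
  by_cases hmem : s(p, q) ∈ Wb.edges
  · -- the path uses pq: it must start with it
    have hp_supp : p ∈ Wb.support := Wb.fst_mem_support_of_mem_edges hmem
    set T := Wb.takeUntil p hp_supp with hT
    set Dr := Wb.dropUntil p hp_supp with hDr
    have hspec : T.append Dr = Wb := Wb.take_spec hp_supp
    have hlen_add : T.length + Dr.length = Wb.length := by
      rw [← Walk.length_append, hspec]
    have hT1 : 1 ≤ T.length := by
      rcases Nat.eq_zero_or_pos T.length with h0 | h0
      · exact absurd (Walk.eq_of_length_eq_zero h0) hpq.ne'
      · exact h0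
    have hDr_nomem : s(p, q) ∉ Dr.edges := by
      intro hDrmem
      have hq : q ∈ Dr.support := Dr.snd_mem_support_of_mem_edges hDrmem
      have hqt : q ∈ Dr.support.tail := by
        rw [Dr.support_eq_cons] at hq
        rcases List.mem_cons.mp hq with h | h
        · exact absurd h.symm hpq.ne
        · exact h
      have hnd : Wb.support.Nodup := hWb_path.support_nodup
      rw [← hspec, Walk.support_append] at hnd
      exact (List.disjoint_of_nodup_append hnd) T.start_mem_support hqt
    have hDr' : ∀ e ∈ Dr.edges, e ∈ G'.edgeSet := by
      intro e he
      rw [hG']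
      simp only [edgeSet_sdiff, edgeSet_fromEdgeSet, edgeSet_sdiff_sdiff_isDiag, Set.mem_diff,
        Set.mem_singleton_iff]
      exact ⟨Dr.edges_subset_edgeSet he, fun h' => hDr_nomem (h' ▸ he)⟩
    have hdist' : G'.dist p x ≤ d - 1 := by
      have := dist_le (Dr.transfer G' hDr')
      rw [Walk.length_transfer] at this
      omega
    omega
  · -- the path avoids pq
    have hW' : ∀ e ∈ Wb.edges, e ∈ G'.edgeSet := by
      intro e he
      rw [hG']
      simp only [edgeSet_sdiff, edgeSet_fromEdgeSet, edgeSet_sdiff_sdiff_isDiag, Set.mem_diff,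
        Set.mem_singleton_iff]
      exact ⟨Wb.edges_subset_edgeSet he, fun h' => hmem (h' ▸ he)⟩
    have hdist' : G'.dist q x ≤ d := by
      have := dist_le (Wb.transfer G' hW')
      rw [Walk.length_transfer] at this
      omega
    have hcomm : G'.dist x q = G'.dist q x := dist_comm
    omega

lemma getVert_eq_support_getElem {u v : V} (w : G.Walk u v) (n : ℕ)
    (h : n < w.support.length) : w.getVert n = w.support[n] := by
  induction w generalizing n with
  | nil =>
    have : n = 0 := by simpa using h
    subst this; simp
  | cons hadj p ih =>
    cases n with
    | zero => simp
    | succ m =>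
      simp only [Walk.support_cons] at h ⊢
      rw [Walk.getVert_cons_succ, ih m (by simpa using h)]
      simp

lemma getVert_succ_eq_tail_getElem {u v : V} (w : G.Walk u v) (m : ℕ)
    (h : m < w.support.tail.length) :
    w.getVert (m + 1) = w.support.tail[m] := by
  rw [List.getElem_tail, ← getVert_eq_support_getElem]

/-- injectivity of `getVert` on `[0, k)` for a cycle of length `k`. -/
lemma cycle_getVert_injOn {a : V} {c : G.Walk a a} (hc : c.IsCycle)
    {i j : ℕ} (hi : i < c.length) (hj : j < c.length)
    (hij : c.getVert i = c.getVert j) : i = j := by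
  have hnd : c.support.tail.Nodup := hc.support_nodup
  have hlen : c.support.length = c.length + 1 := Walk.length_support c
  have htlen : c.support.tail.length = c.length := by
    simp [List.length_tail, hlen]
  obtain ⟨n, hn⟩ : ∃ n, c.length = n + 1 := ⟨c.length - 1, by have := hc.three_le_length; omega⟩
  have hlast : c.support.tail[n]'(by omega) = a := by
    rw [← getVert_succ_eq_tail_getElem c n (by omega), ← hn, Walk.getVert_length]
  cases i with
  | zero =>
    cases j with
    | zero => rfl
    | succ m =>
      rw [Walk.getVert_zero, getVert_succ_eq_tail_getElem c m (by omega)] at hij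
      have := hnd.getElem_inj_iff.mp (hij.symm.trans hlast.symm)
      omega
  | succ l =>
    cases j with
    | zero =>
      rw [Walk.getVert_zero, getVert_succ_eq_tail_getElem c l (by omega)] at hij
      have := hnd.getElem_inj_iff.mp (hij.trans hlast.symm)
      omega
    | succ m =>
      rw [getVert_succ_eq_tail_getElem c l (by omega),
        getVert_succ_eq_tail_getElem c m (by omega)] at hij
      have := hnd.getElem_inj_iff.mp hij
      omega


end OCAux

/-- If the shortest cycle through the edge `pq` has length `k ≥ 4`,
then `G` has a strongly connected oriented subgraph containing `p` and `q` of
(directed) diameter at most `6d - 2⌊k/2⌋ - 3`. -/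



theorem orientedCore_diameter {V : Type*} [Fintype V]
    (G : SimpleGraph V) (d k : ℕ) (p q : V)
    (h2ec : TwoEdgeConnected G) (hdiam : HasDiam G d) (hpq : G.Adj p q)
    (hcyc : ShortestCycleThroughEdge G p q k) (hk4 : 4 ≤ k) :
    ∃ (S : Set V) (D : V → V → Prop),
      IsOrientedSubgraph G S D ∧ p ∈ S ∧ q ∈ S ∧
      ∀ u ∈ S, ∀ v ∈ S, DiPathLE D u v (6 * d - 2 * (k / 2) - 3) := by
    classical
  obtain ⟨⟨a, c, hc, hpe, hlen⟩, hmin⟩ := hcyc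
  obtain ⟨hconn, hdd, -⟩ := hdiam
  have hk2d : k ≤ 2 * d + 1 :=
    OCAux.cycle_length_le (h2ec.2 s(p, q)) hconn hdd hpq hmin hk4
  have hk0 : 0 < k := by omega
  set f : ℕ → V := fun n => c.getVert (n % k) with hf
  have hfmod : ∀ n, f (n % k) = f n := by
    intro n
    simp only [hf, Nat.mod_mod_of_dvd n dvd_rfl]
  have hinj : ∀ i < k, ∀ j < k, f i = f j → i = j := by
    intro i hi j hj hij
    simp only [hf, Nat.mod_eq_of_lt hi, Nat.mod_eq_of_lt hj] at hij
    exact OCAux.cycle_getVert_injOn hc (by omega) (by omega) hij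
  have hadjf : ∀ n, G.Adj (f n) (f (n + 1)) := by
    intro n
    have hnk : n % k < k := Nat.mod_lt n hk0
    rcases Nat.lt_or_ge (n % k + 1) k with h | h
    · have h1 : (n + 1) % k = n % k + 1 := by
        rw [← Nat.mod_add_mod, Nat.mod_eq_of_lt h]
      simp only [hf]
      rw [h1]
      exact c.adj_getVert_succ (by omega)
    · have hik : n % k = k - 1 := by omega
      have h1 : (n + 1) % k = 0 := by
        rw [← Nat.mod_add_mod, hik, show k - 1 + 1 = k from by omega, Nat.mod_self]
      simp only [hf]
      rw [h1, hik, SimpleGraph.Walk.getVert_zero]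
      have h2 := c.adj_getVert_succ (i := k - 1) (by omega)
      rw [show k - 1 + 1 = c.length from by omega, SimpleGraph.Walk.getVert_length] at h2
      exact h2
  refine ⟨{v | ∃ i, i < k ∧ v = f i}, fun u v => ∃ i, i < k ∧ u = f i ∧ v = f (i + 1),
      ⟨?_, ?_⟩, ?_, ?_, ?_⟩
  · rintro u v ⟨i, hi, rfl, rfl⟩
    exact ⟨hadjf i, ⟨i, hi, rfl⟩, ⟨(i + 1) % k, Nat.mod_lt _ hk0, (hfmod (i + 1)).symm⟩⟩
  · rintro u v ⟨⟨i, hi, rfl, huv⟩, ⟨j, hj, h1, h2⟩⟩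
    have e1 : (i + 1) % k = j := hinj _ (Nat.mod_lt _ hk0) _ hj
      ((hfmod (i + 1)).trans (huv.symm.trans h1))
    have e2 : (j + 1) % k = i := hinj _ (Nat.mod_lt _ hk0) _ hi
      ((hfmod (j + 1)).trans h2.symm)
    have e3 : (i + 1 + 1) % k = i := by rw [← Nat.mod_add_mod, e1, e2]
    rcases Nat.lt_or_ge (i + 1 + 1) k with h | h
    · rw [Nat.mod_eq_of_lt h] at e3
      omega
    · rw [Nat.mod_eq_sub_mod h, Nat.mod_eq_of_lt (by omega)] at e3
      omega
  · obtain ⟨n, hgv, hnle⟩ := SimpleGraph.Walk.mem_support_iff_exists_getVert.mp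
      (c.fst_mem_support_of_mem_edges hpe)
    rcases Nat.lt_or_ge n k with h | h
    · exact ⟨n, h, by simp only [hf, Nat.mod_eq_of_lt h]; exact hgv.symm⟩
    · refine ⟨0, hk0, ?_⟩
      simp only [hf, Nat.zero_mod, SimpleGraph.Walk.getVert_zero]
      have : n = c.length := by omega
      rw [this, SimpleGraph.Walk.getVert_length] at hgv
      exact hgv.symm
  · obtain ⟨n, hgv, hnle⟩ := SimpleGraph.Walk.mem_support_iff_exists_getVert.mp
      (c.snd_mem_support_of_mem_edges hpe)
    rcases Nat.lt_or_ge n k with h | h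
    · exact ⟨n, h, by simp only [hf, Nat.mod_eq_of_lt h]; exact hgv.symm⟩
    · refine ⟨0, hk0, ?_⟩
      simp only [hf, Nat.zero_mod, SimpleGraph.Walk.getVert_zero]
      have : n = c.length := by omega
      rw [this, SimpleGraph.Walk.getVert_length] at hgv
      exact hgv.symm
  · rintro u ⟨i, hi, rfl⟩ v ⟨j, hj, rfl⟩
    refine ⟨(j + k - i) % k, by have := Nat.mod_lt (j + k - i) hk0; omega,
      fun t => f (i + t), by simp, ?_, ?_⟩
    · calc f (i + (j + k - i) % k)
          = f ((i + (j + k - i) % k) % k) := (hfmod _).symm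
        _ = f ((i + (j + k - i)) % k) := by rw [Nat.add_mod_mod]
        _ = f ((j + k) % k) := by rw [show i + (j + k - i) = j + k from by omega]
        _ = f (j % k) := by rw [Nat.add_mod_right]
        _ = f j := hfmod j
    · intro t ht
      refine ⟨(i + t) % k, Nat.mod_lt _ hk0, (hfmod (i + t)).symm, ?_⟩
      calc f (i + (t + 1)) = f (i + t + 1) := by rw [Nat.add_assoc]
        _ = f ((i + t + 1) % k) := (hfmod _).symm
        _ = f (((i + t) % k + 1) % k) := by rw [Nat.mod_add_mod]
        _ = f ((i + t) % k + 1) := hfmod _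
end

section
/- Let G be a graph, let →H be a strongly connected oriented subgraph of G whose (directed) diameter is at most 17 and whose vertex set V(→H) is a 1-step dominating set of G, and suppose the graph G₀ obtained from G by contracting V(→H) to a single vertex is 2-edge connected and has an orientation (edge-disjoint from →H) of diameter at most 4. Then combining these orientations and orienting the remaining edges of G arbitrarily yields a strong orientation of G of diameter at most 21. -/
section Helpers

variable {V : Type*}

lemma dipath_mono {D : V → V → Prop} {u v : V} {m n : ℕ}
    (h : DiPathLE D u v m) (hmn : m ≤ n) : DiPathLE D u v n := by
  obtain ⟨k, hk, f, h0, hm, ha⟩ := h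
  exact ⟨k, hk.trans hmn, f, h0, hm, ha⟩

lemma dipath_map {D E : V → V → Prop} (hDE : ∀ a b, D a b → E a b)
    {u v : V} {n : ℕ} (h : DiPathLE D u v n) : DiPathLE E u v n := by
  obtain ⟨k, hk, f, h0, hm, ha⟩ := h
  exact ⟨k, hk, f, h0, hm, fun i hi => hDE _ _ (ha i hi)⟩

lemma dipath_refl (D : V → V → Prop) (u : V) : DiPathLE D u u 0 :=
  ⟨0, le_refl 0, fun _ => u, rfl, rfl, fun i hi => absurd hi (by omega)⟩

lemma dipath_trans {D : V → V → Prop} {u v w : V} {m n : ℕ}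
    (h1 : DiPathLE D u v m) (h2 : DiPathLE D v w n) : DiPathLE D u w (m + n) := by
  obtain ⟨k, hk, f, hf0, hfk, hfa⟩ := h1
  obtain ⟨l, hl, g, hg0, hgl, hga⟩ := h2
  refine ⟨k + l, Nat.add_le_add hk hl,
    fun i => if i ≤ k then f i else g (i - k), ?_, ?_, ?_⟩
  · simp [hf0]
  · rcases Nat.eq_zero_or_pos l with h0 | hpos
    · subst h0
      simp only [Nat.add_zero, le_refl, if_pos]
      rw [hfk, ← hg0, hgl]
    · have hnle : ¬ (k + l ≤ k) := by omega
      simp only [hnle, if_neg, if_false]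
      rw [Nat.add_sub_cancel_left] at *
      exact hgl
  · intro i hi
    rcases lt_trichotomy i k with h | h | h
    · have h1' : i ≤ k := h.le
      have h2' : i + 1 ≤ k := h
      simp only [h1', h2', if_pos]
      exact hfa i h
    · subst h
      have h1' : i ≤ i := le_refl i
      have h2' : ¬ (i + 1 ≤ i) := by omega
      simp only [h1', h2', if_pos, if_neg, if_false]
      have : i + 1 - i = 1 := by omega
      rw [this, hfk, ← hg0]
      exact hga 0 (by omega)
    · have h1' : ¬ (i ≤ k) := by omega
      have h2' : ¬ (i + 1 ≤ k) := by omega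
      simp only [h1', h2', if_neg, if_false]
      have : i + 1 - k = (i - k) + 1 := by omega
      rw [this]
      exact hga (i - k) (by omega)

lemma dipath_single {D : V → V → Prop} {u v : V} (h : D u v) : DiPathLE D u v 1 := by
  refine ⟨1, le_refl 1, fun i => if i = 0 then u else v, rfl, rfl, ?_⟩
  intro i hi
  have : i = 0 := by omega
  subst this
  simpa using h

lemma dipath_snoc {D : V → V → Prop} {u v w : V} {m : ℕ}
    (h1 : DiPathLE D u v m) (h2 : D v w) : DiPathLE D u w (m + 1) :=
  dipath_trans h1 (dipath_single h2)

lemma mem_S_of_mk_eq {S : Set V} {x s : V} (hs : s ∈ S)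
    (h : Quotient.mk (contractSetoid S) x = Quotient.mk (contractSetoid S) s) : x ∈ S := by
  rcases (Quotient.exact h : x = s ∨ (x ∈ S ∧ s ∈ S)) with rfl | ⟨h1, _⟩
  · exact hs
  · exact h1

lemma mk_eq_of_mem {S : Set V} {x s : V} (hx : x ∈ S) (hs : s ∈ S) :
    Quotient.mk (contractSetoid S) x = Quotient.mk (contractSetoid S) s :=
  Quotient.sound (Or.inr ⟨hx, hs⟩)

lemma eq_of_mk_eq {S : Set V} {x y : V} (hx : x ∉ S)
    (h : Quotient.mk (contractSetoid S) x = Quotient.mk (contractSetoid S) y) : x = y := by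
  rcases (Quotient.exact h : x = y ∨ (x ∈ S ∧ y ∈ S)) with rfl | ⟨h1, _⟩
  · rfl
  · exact absurd h1 hx

/-- Lift a directed walk in the quotient that avoids the contracted vertex. -/
lemma lift_nostar (G : SimpleGraph V) (S : Set V)
    (O₀ : Quotient (contractSetoid S) → Quotient (contractSetoid S) → Prop)
    (O : V → V → Prop)
    (hO₀adj : ∀ a b, O₀ a b → (contractGraph G S).Adj a b)
    (hOO₀ : ∀ u v, G.Adj u v → ¬(u ∈ S ∧ v ∈ S) →
      (O u v ↔ O₀ (Quotient.mk (contractSetoid S) u) (Quotient.mk (contractSetoid S) v)))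
    (s₀ : V) (hs₀ : s₀ ∈ S)
    (f : ℕ → Quotient (contractSetoid S)) :
    ∀ (m : ℕ),
      (∀ i < m, O₀ (f i) (f (i + 1))) →
      (∀ i ≤ m, f i ≠ Quotient.mk (contractSetoid S) s₀) →
      ∀ x : V, Quotient.mk (contractSetoid S) x = f 0 →
      ∃ y : V, Quotient.mk (contractSetoid S) y = f m ∧ DiPathLE O x y m := by
  intro m
  induction m with
  | zero =>
    intro _ _ x hx
    exact ⟨x, hx, dipath_refl O x⟩
  | succ m ih =>
    intro harc hne x hx
    obtain ⟨y, hy, hpath⟩ := ih (fun i hi => harc i (by omega)) (fun i hi => hne i (by omega)) x hx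
    have harc' : O₀ (f m) (f (m + 1)) := harc m (by omega)
    obtain ⟨-, x', y', hx', hy', hadj⟩ := hO₀adj _ _ harc'
    have hx'S : x' ∉ S := by
      intro hmem
      exact hne m (by omega) (hx' ▸ mk_eq_of_mem hmem hs₀)
    have hxy : x' = y := eq_of_mk_eq hx'S (by rw [hx', hy])
    subst hxy
    have hOyy' : O x' y' := by
      refine (hOO₀ x' y' hadj (fun h => hx'S h.1)).mpr ?_
      rw [hx', hy']
      exact harc'
    exact ⟨y', hy', dipath_snoc hpath hOyy'⟩

end Helpers

/-- If `→H` (with vertex set `S`, arcs `D`) is a strongly connected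
oriented subgraph of `G` of directed diameter at most 17 whose vertex set is a
1-step dominating set, the contraction `G/S` is 2-edge connected and `O₀` is an
orientation of `G/S` of diameter at most 4, then any orientation `O` of `G`
extending `D`, agreeing with `O₀` on all edges not inside `S`, and orienting the
remaining edges arbitrarily, is a strong orientation of `G` of diameter at most 21. -/
theorem combine_orientations_diam21 {V : Type*} [Fintype V]
    (G : SimpleGraph V) (S : Set V) (D : V → V → Prop)
    (hsub : IsOrientedSubgraph G S D)
    (hdiam17 : ∀ u ∈ S, ∀ v ∈ S, DiPathLE D u v 17)
    (hdom : KStepDom G S 1)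
    (h2ec : TwoEdgeConnected (contractGraph G S))
    (O₀ : Quotient (contractSetoid S) → Quotient (contractSetoid S) → Prop)
    (hO₀ : IsOrientation (contractGraph G S) O₀)
    (hO₀diam : ∀ a b, DiPathLE O₀ a b 4)
    (O : V → V → Prop)
    (hO : IsOrientation G O)
    (hOD : ∀ u v, D u v → O u v)
    (hOO₀ : ∀ u v, G.Adj u v → ¬(u ∈ S ∧ v ∈ S) →
      (O u v ↔ O₀ (Quotient.mk (contractSetoid S) u) (Quotient.mk (contractSetoid S) v))) :
    ∀ u v : V, DiPathLE O u v 21 := by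
  classical
  intro u v
  obtain ⟨s₀, hs₀, -⟩ := hdom u
  obtain ⟨m, hm, f, hf0, hfm, hfa⟩ :=
    hO₀diam (Quotient.mk (contractSetoid S) u) (Quotient.mk (contractSetoid S) v)
  set q : Quotient (contractSetoid S) := Quotient.mk (contractSetoid S) s₀ with hq
  by_cases hstar : ∃ i, i ≤ m ∧ f i = q
  · -- the quotient walk passes through the contracted vertex
    obtain ⟨i₀, hi₀m, hi₀q, hi₀min⟩ : ∃ i, i ≤ m ∧ f i = q ∧ ∀ k < i, f k ≠ q := by
      refine ⟨Nat.find hstar, (Nat.find_spec hstar).1, (Nat.find_spec hstar).2, ?_⟩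
      intro k hk hfk
      exact Nat.find_min hstar hk ⟨by have := (Nat.find_spec hstar).1; omega, hfk⟩
    obtain ⟨j₀, hj₀m, hj₀q, hj₀max⟩ :
        ∃ j, j ≤ m ∧ f j = q ∧ ∀ k, j < k → k ≤ m → f k ≠ q := by
      obtain ⟨iw, hiwm, hiwq⟩ := hstar
      exact ⟨Nat.findGreatest (fun n => f n = q) m, Nat.findGreatest_le m,
        Nat.findGreatest_spec (P := fun n => f n = q) hiwm hiwq,
        fun k h1 h2 => Nat.findGreatest_is_greatest (P := fun n => f n = q) h1 h2⟩
    have hij : i₀ ≤ j₀ := by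
      by_contra h
      exact hi₀min j₀ (by omega) hj₀q
    -- prefix: from u to some s ∈ S, length ≤ i₀
    have hpre : ∃ s ∈ S, DiPathLE O u s i₀ := by
      rcases Nat.eq_zero_or_pos i₀ with h0 | hpos
      · have hfq : f 0 = q := by rw [← h0]; exact hi₀q
        have hu : u ∈ S := mem_S_of_mk_eq hs₀ (by rw [← hf0, hfq, hq])
        exact ⟨u, hu, h0 ▸ dipath_refl O u⟩
      · obtain ⟨k, rfl⟩ : ∃ k, i₀ = k + 1 := ⟨i₀ - 1, by omega⟩
        obtain ⟨y, hy, hpath⟩ := lift_nostar G S O₀ O hO₀.1 hOO₀ s₀ hs₀ f k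
          (fun i hi => hfa i (by omega)) (fun i hi => hi₀min i (by omega)) u hf0.symm
        have harc' : O₀ (f k) (f (k + 1)) := hfa k (by omega)
        obtain ⟨-, x', y', hx', hy', hadj⟩ := hO₀.1 _ _ harc'
        have hx'S : x' ∉ S := by
          intro hmem
          exact hi₀min k (by omega) (hx' ▸ mk_eq_of_mem hmem hs₀)
        have hxy : x' = y := eq_of_mk_eq hx'S (by rw [hx', hy])
        subst hxy
        have hy'S : y' ∈ S := mem_S_of_mk_eq hs₀ (by rw [hy', hi₀q])
        have hOyy' : O x' y' := by
          refine (hOO₀ x' y' hadj (fun h => hx'S h.1)).mpr ?_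
          rw [hx', hy']; exact harc'
        exact ⟨y', hy'S, dipath_snoc hpath hOyy'⟩
    -- suffix: from some s' ∈ S to v, length ≤ m - j₀
    have hsuf : ∃ s' ∈ S, DiPathLE O s' v (m - j₀) := by
      rcases Nat.eq_or_lt_of_le hj₀m with h0 | hlt
      · have hv : v ∈ S := mem_S_of_mk_eq hs₀ (by rw [← hfm, ← h0, hj₀q])
        have : m - j₀ = 0 := by omega
        exact ⟨v, hv, this ▸ dipath_refl O v⟩
      · have harc' : O₀ (f j₀) (f (j₀ + 1)) := hfa j₀ hlt
        obtain ⟨-, x', y', hx', hy', hadj⟩ := hO₀.1 _ _ harc'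
        have hx'S : x' ∈ S := mem_S_of_mk_eq hs₀ (by rw [hx', hj₀q])
        have hy'S : y' ∉ S := by
          intro hmem
          exact hj₀max (j₀ + 1) (by omega) hlt (hy' ▸ mk_eq_of_mem hmem hs₀)
        have hOxy : O x' y' := by
          refine (hOO₀ x' y' hadj (fun h => hy'S h.2)).mpr ?_
          rw [hx', hy']; exact harc'
        -- lift the strict suffix
        set g : ℕ → Quotient (contractSetoid S) := fun i => f (j₀ + 1 + i) with hg
        obtain ⟨z, hz, hpath⟩ := lift_nostar G S O₀ O hO₀.1 hOO₀ s₀ hs₀ g (m - (j₀ + 1))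
          (fun i hi => by
            show O₀ (f (j₀ + 1 + i)) (f (j₀ + 1 + (i + 1)))
            have he : j₀ + 1 + (i + 1) = (j₀ + 1 + i) + 1 := by omega
            rw [he]
            exact hfa (j₀ + 1 + i) (by omega))
          (fun i hi => hj₀max (j₀ + 1 + i) (by omega) (by omega))
          y' (by simp [hg, hy'])
        have hgm : g (m - (j₀ + 1)) = f m := by
          have : j₀ + 1 + (m - (j₀ + 1)) = m := by omega
          simp [hg, this]
        rw [hgm, hfm] at hz
        have hzS : z ∉ S := by
          intro hmem
          exact hj₀max m (by omega) (le_refl m) (by rw [hfm, ← hz, hq]; exact mk_eq_of_mem hmem hs₀)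
        have hzv : z = v := eq_of_mk_eq hzS hz
        have : DiPathLE O x' v (1 + (m - (j₀ + 1))) :=
          dipath_trans (dipath_single hOxy) (hzv ▸ hpath)
        exact ⟨x', hx'S, dipath_mono this (by omega)⟩
    obtain ⟨s, hsS, hps⟩ := hpre
    obtain ⟨s', hs'S, hps'⟩ := hsuf
    have hmid : DiPathLE O s s' 17 := dipath_map hOD (hdiam17 s hsS s' hs'S)
    have := dipath_trans (dipath_trans hps hmid) hps'
    exact dipath_mono this (by omega)
  · -- the quotient walk avoids the contracted vertex
    push_neg at hstar
    obtain ⟨y, hy, hpath⟩ := lift_nostar G S O₀ O hO₀.1 hOO₀ s₀ hs₀ f m hfa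
      (fun i hi => hstar i hi) u hf0.symm
    have hyS : y ∉ S := by
      intro hmem
      exact hstar m (le_refl m) (by rw [← hy]; exact mk_eq_of_mem hmem hs₀)
    have hyv : y = v := eq_of_mk_eq hyS (by rw [hy, hfm])
    subst hyv
    exact dipath_mono hpath (by omega)
end

section
/- (Chvátal–Thomassen) Every 2-edge connected graph of radius r admits a strong orientation of radius at most r² + r. -/
namespace CTaux

variable {V : Type*}

/-- A walk of length exactly `m` along relation `R`. -/
def Wk (R : V → V → Prop) (u v : V) (m : ℕ) : Prop :=
  ∃ f : ℕ → V, f 0 = u ∧ f m = v ∧ ∀ i < m, R (f i) (f (i + 1))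

theorem Wk.refl (R : V → V → Prop) (u : V) : Wk R u u 0 :=
  ⟨fun _ => u, rfl, rfl, fun i hi => absurd hi (Nat.not_lt_zero i)⟩

theorem Wk.single {R : V → V → Prop} {u v : V} (h : R u v) : Wk R u v 1 := by
  refine ⟨fun i => if i = 0 then u else v, by simp, by simp, ?_⟩
  intro i hi
  interval_cases i
  simpa using h

theorem Wk.mono {R R' : V → V → Prop} (hRR : ∀ a b, R a b → R' a b) {u v : V} {m : ℕ}
    (h : Wk R u v m) : Wk R' u v m := by
  obtain ⟨f, h0, hm, hs⟩ := h
  exact ⟨f, h0, hm, fun i hi => hRR _ _ (hs i hi)⟩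

theorem Wk.append {R : V → V → Prop} {u v w : V} {m n : ℕ}
    (h1 : Wk R u v m) (h2 : Wk R v w n) : Wk R u w (m + n) := by
  obtain ⟨f, hf0, hfm, hfs⟩ := h1
  obtain ⟨g, hg0, hgn, hgs⟩ := h2
  refine ⟨fun i => if i < m then f i else g (i - m), ?_, ?_, ?_⟩
  · by_cases h : 0 < m
    · simpa [h] using hf0
    · have : m = 0 := by omega
      subst this
      simpa [hg0] using hfm.symm.trans hf0
  · have h2 : ¬ (m + n < m) := by omega
    have h3 : m + n - m = n := by omega
    simp [h2, h3, hgn]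
  · intro i hi
    by_cases h1i : i + 1 < m
    · have h0i : i < m := by omega
      simpa [h1i, h0i] using hfs i h0i
    · by_cases h0i : i < m
      · have him : i + 1 = m := by omega
        have h4 : i + 1 - m = 0 := by omega
        simp only [if_pos h0i, if_neg h1i, h4]
        rw [hg0, ← hfm, ← him]
        exact hfs i h0i
      · have h2i : ¬ (i + 1 < m) := by omega
        simp only [h0i, if_neg, h2i]
        have : i + 1 - m = (i - m) + 1 := by omega
        rw [this]
        exact hgs (i - m) (by omega)

theorem Wk.rev {R : V → V → Prop} (hR : Symmetric R) {u v : V} {m : ℕ}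
    (h : Wk R u v m) : Wk R v u m := by
  obtain ⟨f, h0, hm, hs⟩ := h
  refine ⟨fun i => f (m - i), by simpa, by simpa, ?_⟩
  intro i hi
  have h1 : m - i = (m - (i+1)) + 1 := by omega
  have h2 := hs (m - (i+1)) (by omega)
  show R (f (m - i)) (f (m - (i+1)))
  rw [h1]
  exact hR h2



/-- There is a directed walk from some vertex of `S` to `w` of length at most `n`. -/
def dinLE (D : V → V → Prop) (S : Set V) (w : V) (n : ℕ) : Prop :=
  ∃ t ∈ S, ∃ m ≤ n, Wk D t w m

/-- There is a directed walk from `w` to some vertex of `S` of length at most `n`. -/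
def doutLE (D : V → V → Prop) (S : Set V) (w : V) (n : ℕ) : Prop :=
  ∃ t ∈ S, ∃ m ≤ n, Wk D w t m

theorem dinLE.mono_rel {D D' : V → V → Prop} {S : Set V} {w : V} {n : ℕ}
    (hDD : ∀ a b, D a b → D' a b) (h : dinLE D S w n) : dinLE D' S w n := by
  obtain ⟨t, ht, m, hm, hw⟩ := h
  exact ⟨t, ht, m, hm, hw.mono hDD⟩

theorem doutLE.mono_rel {D D' : V → V → Prop} {S : Set V} {w : V} {n : ℕ}
    (hDD : ∀ a b, D a b → D' a b) (h : doutLE D S w n) : doutLE D' S w n := by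
  obtain ⟨t, ht, m, hm, hw⟩ := h
  exact ⟨t, ht, m, hm, hw.mono hDD⟩

theorem dinLE.mono_n {D : V → V → Prop} {S : Set V} {w : V} {n n' : ℕ}
    (hnn : n ≤ n') (h : dinLE D S w n) : dinLE D S w n' := by
  obtain ⟨t, ht, m, hm, hw⟩ := h
  exact ⟨t, ht, m, hm.trans hnn, hw⟩

theorem doutLE.mono_n {D : V → V → Prop} {S : Set V} {w : V} {n n' : ℕ}
    (hnn : n ≤ n') (h : doutLE D S w n) : doutLE D S w n' := by
  obtain ⟨t, ht, m, hm, hw⟩ := h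
  exact ⟨t, ht, m, hm.trans hnn, hw⟩

theorem dinLE_flip {D : V → V → Prop} {S : Set V} {w : V} {n : ℕ} :
    dinLE (fun a b => D b a) S w n ↔ doutLE D S w n := by
  constructor
  · rintro ⟨t, ht, m, hm, f, h0, hmv, hs⟩
    refine ⟨t, ht, m, hm, fun i => f (m - i), by simpa, by simpa, ?_⟩
    intro i hi
    have h1 : m - i = (m - (i+1)) + 1 := by omega
    have h2 := hs (m - (i+1)) (by omega)
    show D (f (m - i)) (f (m - (i+1)))
    rw [h1]; exact h2
  · rintro ⟨t, ht, m, hm, f, h0, hmv, hs⟩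
    refine ⟨t, ht, m, hm, fun i => f (m - i), by simpa, by simpa, ?_⟩
    intro i hi
    have h1 : m - i = (m - (i+1)) + 1 := by omega
    have h2 := hs (m - (i+1)) (by omega)
    show D (f (m - (i+1))) (f (m - i))
    rw [h1]; exact h2

theorem doutLE_flip {D : V → V → Prop} {S : Set V} {w : V} {n : ℕ} :
    doutLE (fun a b => D b a) S w n ↔ dinLE D S w n := by
  exact (@dinLE_flip V (fun a b => D b a) S w n).symm

/-- Walk from S to w, then continue from w to z. -/
theorem dinLE.extend {D : V → V → Prop} {S : Set V} {w z : V} {a m : ℕ}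
    (h : dinLE D S w a) (hw : Wk D w z m) : dinLE D S z (a + m) := by
  obtain ⟨t, ht, m', hm', hw'⟩ := h
  exact ⟨t, ht, m' + m, by omega, hw'.append hw⟩

/-- Walk from z to w, then w to S. -/
theorem doutLE.prepend {D : V → V → Prop} {S : Set V} {w z : V} {b m : ℕ}
    (h : doutLE D S w b) (hw : Wk D z w m) : doutLE D S z (m + b) := by
  obtain ⟨t, ht, m', hm', hw'⟩ := h
  exact ⟨t, ht, m + m', by omega, hw.append hw'⟩

/-- `w` is incident to some arc of `D`. -/
def touched (D : V → V → Prop) (w : V) : Prop := ∃ z, D w z ∨ D z w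

theorem touched_flip {D : V → V → Prop} {w : V} :
    touched (fun a b => D b a) w ↔ touched D w := by
  unfold touched
  constructor <;> (rintro ⟨z, h | h⟩; exacts [⟨z, Or.inr h⟩, ⟨z, Or.inl h⟩])



/-- The adjacency relation with the edge `{s,x}` removed. -/
def EE (A : V → V → Prop) (s x : V) : V → V → Prop :=
  fun a b => A a b ∧ ¬(a = s ∧ b = x) ∧ ¬(a = x ∧ b = s)

theorem EE_symm {A : V → V → Prop} (hA : Symmetric A) (s x : V) : Symmetric (EE A s x) := by
  rintro a b ⟨hab, h1, h2⟩
  exact ⟨hA hab, fun h => h2 ⟨h.2, h.1⟩, fun h => h1 ⟨h.2, h.1⟩⟩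

theorem EE_sub {A : V → V → Prop} {s x : V} : ∀ a b, EE A s x a b → A a b :=
  fun _ _ h => h.1

/-- Truncation lemma: any `A`-walk from `z` to `S` yields either an `e`-free walk from `z`
to `S`, or an `e`-free walk from `z` to `x` which is strictly shorter. -/
theorem trunc {A : V → V → Prop} {S : Set V} {s x z : V} (hs : s ∈ S) {n : ℕ}
    (h : doutLE A S z n) :
    doutLE (EE A s x) S z n ∨ ∃ m, m + 1 ≤ n ∧ Wk (EE A s x) z x m := by
  obtain ⟨t, ht, L, hL, g, hg0, hgL, hgs⟩ := h
  -- first index hitting S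
  have hne : {j | g j ∈ S ∧ j ≤ L}.Nonempty := ⟨L, by rw [hgL]; exact ht, le_refl L⟩
  set j0 := sInf {j | g j ∈ S ∧ j ≤ L} with hj0def
  have hj0mem : g j0 ∈ S ∧ j0 ≤ L := Nat.sInf_mem hne
  have hj0min : ∀ j < j0, ¬(g j ∈ S ∧ j ≤ L) := fun j hj => Nat.notMem_of_lt_sInf hj
  have hj0notS : ∀ j < j0, g j ∉ S := by
    intro j hj hjS
    exact hj0min j hj ⟨hjS, le_of_lt (lt_of_lt_of_le hj hj0mem.2)⟩
  by_cases hcase : ∀ j < j0, ¬((g j = s ∧ g (j+1) = x) ∨ (g j = x ∧ g (j+1) = s))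
  · left
    refine ⟨g j0, hj0mem.1, j0, hj0mem.2.trans hL, g, hg0, rfl, ?_⟩
    intro i hi
    exact ⟨hgs i (lt_of_lt_of_le hi hj0mem.2), fun hh => hcase i hi (Or.inl hh),
      fun hh => hcase i hi (Or.inr hh)⟩
  · right
    push_neg at hcase
    obtain ⟨j, hj, hjx⟩ := hcase
    have hgjx : g j = x := by
      rcases hjx with ⟨h1, _⟩ | ⟨h1, _⟩
      · exact absurd (h1 ▸ hs) (hj0notS j hj)
      · exact h1
    -- least index with g = x
    have hne2 : {i | g i = x}.Nonempty := ⟨j, hgjx⟩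
    set j1 := sInf {i | g i = x} with hj1def
    have hj1mem : g j1 = x := Nat.sInf_mem hne2
    have hj1le : j1 ≤ j := Nat.sInf_le hgjx
    have hj1min : ∀ i < j1, g i ≠ x := fun i hi => Nat.notMem_of_lt_sInf hi
    refine ⟨j1, ?_, g, hg0, hj1mem, ?_⟩
    · have h1 : j1 < j0 := lt_of_le_of_lt hj1le hj
      have h2 := hj0mem.2
      omega
    · intro i hi
      refine ⟨hgs i ?_, ?_, ?_⟩
      · have : j1 ≤ L := le_of_lt (lt_of_lt_of_le (lt_of_le_of_lt hj1le hj) hj0mem.2)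
        omega
      · rintro ⟨h1, h2⟩
        have hi1 : i + 1 = j1 := by
          by_contra hne
          exact hj1min (i+1) (by omega) h2
        have : g i ∉ S := hj0notS i (by omega)
        exact this (h1 ▸ hs)
      · rintro ⟨h1, _⟩
        exact hj1min i hi h1



/-- No edge receives both directions. -/
def Cons (D : V → V → Prop) : Prop := ∀ a b, ¬(D a b ∧ D b a)

/-- Arcs are edges not inside `S`. -/
def SubA (A : V → V → Prop) (S : Set V) (D : V → V → Prop) : Prop :=
  ∀ a b, D a b → A a b ∧ ¬(a ∈ S ∧ b ∈ S)

def Inv1 (k : ℕ) (S : Set V) (D : V → V → Prop) : Prop :=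
  ∀ w, touched D w → w ∉ S →
    ∃ a b, 1 ≤ a ∧ 1 ≤ b ∧ a + b ≤ 2*k+1 ∧ dinLE D S w a ∧ doutLE D S w b

def Inv2 (A : V → V → Prop) (S : Set V) (D : V → V → Prop) : Prop :=
  ∀ w n, touched D w → w ∉ S → doutLE A S w n → dinLE D S w n ∨ doutLE D S w n

def Good (A : V → V → Prop) (k : ℕ) (S : Set V) (D : V → V → Prop) : Prop :=
  Cons D ∧ SubA A S D ∧ Inv1 k S D ∧ Inv2 A S D

theorem good_flip {A : V → V → Prop} (hA : Symmetric A) {k : ℕ} {S : Set V}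
    {D : V → V → Prop} (h : Good A k S D) : Good A k S (fun a b => D b a) := by
  obtain ⟨h1, h2, h3, h4⟩ := h
  refine ⟨?_, ?_, ?_, ?_⟩
  · intro a b ⟨hab, hba⟩
    exact h1 b a ⟨hab, hba⟩
  · intro a b hab
    obtain ⟨hA', hS'⟩ := h2 b a hab
    exact ⟨hA hA', fun hh => hS' ⟨hh.2, hh.1⟩⟩
  · intro w hw hwS
    obtain ⟨a, b, ha, hb, hab, hin, hout⟩ := h3 w (touched_flip.mp hw) hwS
    exact ⟨b, a, hb, ha, by omega, dinLE_flip.mpr hout, doutLE_flip.mpr hin⟩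
  · intro w n hw hwS hdom
    rcases h4 w n (touched_flip.mp hw) hwS hdom with h | h
    · exact Or.inr (doutLE_flip.mpr h)
    · exact Or.inl (dinLE_flip.mpr h)



theorem step_main {A : V → V → Prop} (hA : Symmetric A) {k : ℕ} {S : Set V} {D : V → V → Prop}
    (hD : Good A k S D) {s x : V} (hs : s ∈ S) (hx : x ∉ S) (hsx : A s x)
    (hxun : ¬ touched D x)
    {q : ℕ} {f : ℕ → V} (hf0 : f 0 = x) (hfS : f q ∈ S)
    (hfs : ∀ i < q, EE A s x (f i) (f (i + 1)))
    (hmin : ∀ m, (∃ t ∈ S, Wk (EE A s x) x t m) → q ≤ m)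
    (hq2k : q ≤ 2 * k)
    {p : ℕ} (hp1 : 1 ≤ p) (hpq : p ≤ q)
    (hfresh : ∀ i, 1 ≤ i → i < p → ¬touched D (f i) ∧ f i ∉ S)
    (hporS : f p ∈ S ∨ touched D (f p))
    (hinj : ∀ i, i ≤ q → ∀ j, j ≤ q → f i = f j → i = j)
    (hw : doutLE D S (f p) (q - p)) :
    ∃ D', (∀ a b, D a b → D' a b) ∧ Good A k S D' ∧ touched D' x := by
  classical
  obtain ⟨hCons, hSub, hI1, hI2⟩ := hD
  have hq1 : 1 ≤ q := hp1.trans hpq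
  set D' : V → V → Prop :=
    fun a b => D a b ∨ (a = s ∧ b = x) ∨ ∃ i, i < p ∧ a = f i ∧ b = f (i + 1) with hD'def
  have hDsub : ∀ a b, D a b → D' a b := fun a b h => Or.inl h
  have h_fnotS : ∀ i, i < p → f i ∉ S := by
    intro i hi
    rcases Nat.eq_zero_or_pos i with h0 | h0
    · rw [h0, hf0]; exact hx
    · exact (hfresh i h0 hi).2
  have h_funt : ∀ i, i < p → ¬touched D (f i) := by
    intro i hi
    rcases Nat.eq_zero_or_pos i with h0 | h0
    · rw [h0, hf0]; exact hxun
    · exact (hfresh i h0 hi).1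
  have hsnex : s ≠ x := fun h => hx (h ▸ hs)
  -- the directed walk s → x → f 1 → ... → f i along D'
  have dinw : ∀ i, i < p → Wk D' s (f i) (i + 1) := by
    intro i hip
    refine ⟨fun j => if j = 0 then s else f (j - 1), by simp, by simp, ?_⟩
    intro j hj
    rcases Nat.eq_zero_or_pos j with h0 | h0
    · subst h0
      simp only [if_pos rfl, if_neg (Nat.one_ne_zero)]
      exact Or.inr (Or.inl ⟨rfl, hf0⟩)
    · have hj0 : j ≠ 0 := by omega
      have hj10 : j + 1 ≠ 0 := by omega
      simp only [if_neg hj0, if_neg hj10]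
      refine Or.inr (Or.inr ⟨j - 1, by omega, rfl, ?_⟩)
      congr 1
      omega
  -- the directed walk f i → ... → f p along D'
  have wkp : ∀ i, i ≤ p → Wk D' (f i) (f p) (p - i) := by
    intro i hip
    refine ⟨fun t => f (i + t), by simp, ?_, ?_⟩
    · show f (i + (p - i)) = f p
      rw [Nat.add_sub_cancel' hip]
    · intro t ht
      refine Or.inr (Or.inr ⟨i + t, by omega, rfl, by congr 1⟩)
  have hxtouch : touched D' x := ⟨s, Or.inr (Or.inr (Or.inl ⟨rfl, rfl⟩))⟩
  -- characterization of touched vertices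
  have hchar : ∀ w', touched D' w' → touched D w' ∨ w' = s ∨ ∃ i, i ≤ p ∧ w' = f i := by
    rintro w' ⟨z, hz | hz⟩
    · rcases hz with h | ⟨h1, h2⟩ | ⟨i, hi, h1, h2⟩
      · exact Or.inl ⟨z, Or.inl h⟩
      · exact Or.inr (Or.inl h1)
      · exact Or.inr (Or.inr ⟨i, le_of_lt hi, h1⟩)
    · rcases hz with h | ⟨h1, h2⟩ | ⟨i, hi, h1, h2⟩
      · exact Or.inl ⟨z, Or.inr h⟩
      · exact Or.inr (Or.inr ⟨0, by omega, h2.trans hf0.symm⟩)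
      · exact Or.inr (Or.inr ⟨i + 1, by omega, h2⟩)
  -- consistency
  have hCons' : Cons D' := by
    rintro a b ⟨h1, h2⟩
    rcases h1 with hd1 | ⟨ha1, hb1⟩ | ⟨i, hi, ha1, hb1⟩ <;>
      rcases h2 with hd2 | ⟨ha2, hb2⟩ | ⟨j, hj, ha2, hb2⟩
    · exact hCons a b ⟨hd1, hd2⟩
    · -- h2 : b = s ∧ a = x
      exact hxun ⟨b, Or.inl (hb2 ▸ hd1)⟩
    · -- h2 : b = f j ∧ a = f (j+1)
      exact h_funt j hj ⟨a, Or.inr (ha2 ▸ hd1)⟩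
    · -- h1 : a = s ∧ b = x ; h2 : D b a
      exact hxun ⟨a, Or.inl (hb1 ▸ hd2)⟩
    · -- both edge e
      exact hsnex (ha1.symm.trans hb2)
    · -- h1 : a = s, b = x ; h2 : b = f j, a = f (j+1)
      have hj0 : j = 0 := hinj j (by omega) 0 (by omega) ((ha2.symm.trans hb1).trans hf0.symm)
      have h1s : f (j + 1) = s := ha1 ▸ hb2.symm
      rw [hj0] at h1s
      exact (hfs 0 (by omega)).2.2 ⟨hf0, h1s⟩
    · -- h1 : a = f i, b = f (i+1) ; h2 : D b a
      exact h_funt i hi ⟨b, Or.inr (ha1 ▸ hd2)⟩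
    · -- h1 : a = f i, b = f (i+1) ; h2 : b = s, a = x
      have hi0 : i = 0 := hinj i (by omega) 0 (by omega) ((ha1.symm.trans hb2).trans hf0.symm)
      have h1s : f (i + 1) = s := hb1.symm.trans ha2
      rw [hi0] at h1s
      exact (hfs 0 (by omega)).2.2 ⟨hf0, h1s⟩
    · -- h1 : a = f i, b = f (i+1) ; h2 : b = f j, a = f (j+1)
      have e1 : i = j + 1 := hinj i (by omega) (j+1) (by omega) (ha1.symm.trans hb2)
      have e2 : i + 1 = j := hinj (i+1) (by omega) j (by omega) (hb1.symm.trans ha2)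
      omega
  -- SubA
  have hSub' : SubA A S D' := by
    rintro a b (hd | ⟨ha, hb⟩ | ⟨i, hi, ha, hb⟩)
    · exact hSub a b hd
    · subst ha; subst hb
      exact ⟨hsx, fun h => hx h.2⟩
    · subst ha; subst hb
      exact ⟨((hfs i (by omega)).1 : A _ _), fun h => h_fnotS i hi h.1⟩
  -- invariants for the new touched vertices handled uniformly
  have hnewIn : ∀ i, i < p → dinLE D' S (f i) (i + 1) :=
    fun i hi => ⟨s, hs, i + 1, le_refl _, dinw i hi⟩
  have hnewOut : ∀ i, i < p → doutLE D' S (f i) ((p - i) + (q - p)) := by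
    intro i hi
    have h1 : doutLE D' S (f p) (q - p) := hw.mono_rel hDsub
    exact h1.prepend (wkp i (le_of_lt hi))
  have hI1' : Inv1 k S D' := by
    intro w' hw' hw'S
    rcases hchar w' hw' with hold | rfl | ⟨i, hip, rfl⟩
    · obtain ⟨a, b, ha, hb, hab, hin, hout⟩ := hI1 w' hold hw'S
      exact ⟨a, b, ha, hb, hab, hin.mono_rel hDsub, hout.mono_rel hDsub⟩
    · exact absurd hs hw'S
    · rcases Nat.lt_or_ge i p with hilt | hige
      · refine ⟨i + 1, (p - i) + (q - p), by omega, by omega, by omega,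
          hnewIn i hilt, hnewOut i hilt⟩
      · have hip' : i = p := by omega
        subst hip'
        rcases hporS with hS | htch
        · exact absurd hS hw'S
        · obtain ⟨a, b, ha, hb, hab, hin, hout⟩ := hI1 (f i) htch hw'S
          exact ⟨a, b, ha, hb, hab, hin.mono_rel hDsub, hout.mono_rel hDsub⟩
  have hI2' : Inv2 A S D' := by
    intro w' n hw' hw'S hdomw
    rcases hchar w' hw' with hold | rfl | ⟨i, hip, rfl⟩
    · rcases hI2 w' n hold hw'S hdomw with h | h
      · exact Or.inl (h.mono_rel hDsub)
      · exact Or.inr (h.mono_rel hDsub)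
    · exact absurd hs hw'S
    · rcases Nat.lt_or_ge i p with hilt | hige
      · rcases trunc hs hdomw with ⟨t, ht, m, hm, hwEE⟩ | ⟨m, hm1, hwEE⟩
        · -- e-free walk f i → t ∈ S of length m; hence q ≤ i + m
          have hpre : Wk (EE A s x) x (f i) i :=
            ⟨f, hf0, rfl, fun j hj => hfs j (by omega)⟩
          have hqle : q ≤ i + m := hmin (i + m) ⟨t, ht, hpre.append hwEE⟩
          exact Or.inr ((hnewOut i hilt).mono_n (by omega))
        · -- e-free walk f i → x of length m with m + 1 ≤ n; hence i ≤ m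
          have hrev : Wk (EE A s x) x (f i) m := hwEE.rev (EE_symm hA s x)
          have hsuf : Wk (EE A s x) (f i) (f q) (q - i) := by
            refine ⟨fun t => f (i + t), by simp, ?_, ?_⟩
            · show f (i + (q - i)) = f q
              rw [Nat.add_sub_cancel' (by omega : i ≤ q)]
            · intro t ht
              exact hfs (i + t) (by omega)
          have hqle : q ≤ m + (q - i) := hmin (m + (q - i)) ⟨f q, hfS, hrev.append hsuf⟩
          have him : i ≤ m := by omega
          exact Or.inl ((hnewIn i hilt).mono_n (by omega))
      · have hip' : i = p := by omega
        subst hip'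
        rcases hporS with hS | htch
        · exact absurd hS hw'S
        · rcases hI2 (f i) n htch hw'S hdomw with h | h
          · exact Or.inl (h.mono_rel hDsub)
          · exact Or.inr (h.mono_rel hDsub)
  exact ⟨D', hDsub, ⟨hCons', hSub', hI1', hI2'⟩, hxtouch⟩



theorem step_s11 {A : V → V → Prop} (hA : Symmetric A) {k : ℕ} {S : Set V} {D : V → V → Prop}
    (hD : Good A k S D) {s x : V} (hs : s ∈ S) (hx : x ∉ S) (hsx : A s x)
    (hxun : ¬touched D x)
    (hdom : ∀ z, doutLE A S z k)
    (hbr : ∃ m, Wk (EE A s x) x s m) :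
    ∃ D', (∀ a b, D a b → D' a b) ∧ Good A k S D' ∧ touched D' x := by
  classical
  have hQne : {m | ∃ t ∈ S, Wk (EE A s x) x t m}.Nonempty := by
    obtain ⟨m, hm⟩ := hbr
    exact ⟨m, s, hs, hm⟩
  set q := sInf {m | ∃ t ∈ S, Wk (EE A s x) x t m} with hqdef
  have hqmem : ∃ t ∈ S, Wk (EE A s x) x t q := Nat.sInf_mem hQne
  obtain ⟨t0, ht0, f, hf0, hfq, hfs⟩ := hqmem
  have hfS : f q ∈ S := by rw [hfq]; exact ht0
  have hmin : ∀ m, (∃ t ∈ S, Wk (EE A s x) x t m) → q ≤ m := fun m hm => Nat.sInf_le hm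
  have hprefix : ∀ i, i ≤ q → Wk (EE A s x) x (f i) i :=
    fun i hi => ⟨f, hf0, rfl, fun j hj => hfs j (by omega)⟩
  have hsuffix : ∀ i, i ≤ q → Wk (EE A s x) (f i) (f q) (q - i) := by
    intro i hi
    refine ⟨fun t => f (i + t), by simp, ?_, ?_⟩
    · show f (i + (q - i)) = f q
      rw [Nat.add_sub_cancel' hi]
    · intro t ht
      exact hfs (i + t) (by omega)
  have hnotS : ∀ i, i < q → f i ∉ S := by
    intro i hi hiS
    have := hmin i ⟨f i, hiS, hprefix i (le_of_lt hi)⟩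
    omega
  have hq1 : 1 ≤ q := by
    by_contra hq0
    have h0 : q = 0 := by omega
    apply hx
    have h1 := hfS
    rw [h0] at h1
    exact hf0 ▸ h1
  have hinj : ∀ i, i ≤ q → ∀ j, j ≤ q → f i = f j → i = j := by
    have key : ∀ i j, i < j → j ≤ q → f i = f j → False := by
      intro i j hij hjq hfij
      set L := q - (j - i) with hLdef
      have hwalk : Wk (EE A s x) x (f q) L := by
        refine ⟨fun t => if t ≤ i then f t else f (t + (j - i)), by simp [hf0], ?_, ?_⟩
        · by_cases hLi : L ≤ i
          · have hqj : q = j := by omega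
            have hLi' : L = i := by omega
            simp only [if_pos hLi]
            rw [hLi', hfij, ← hqj]
          · simp only [if_neg hLi]
            congr 1
            omega
        · intro t ht
          by_cases h1 : t + 1 ≤ i
          · have h2 : t ≤ i := by omega
            simp only [if_pos h1, if_pos h2]
            exact hfs t (by omega)
          · by_cases h2 : t ≤ i
            · have hti : t = i := by omega
              simp only [if_pos h2, if_neg h1]
              rw [hti, hfij]
              have heq : i + 1 + (j - i) = j + 1 := by omega
              rw [heq]
              exact hfs j (by omega)
            · simp only [if_neg h1, if_neg h2]
              have : t + 1 + (j - i) = (t + (j - i)) + 1 := by omega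
              rw [this]
              exact hfs (t + (j - i)) (by omega)
      have := hmin L ⟨f q, hfS, hwalk⟩
      omega
    intro i hi j hj hfij
    rcases Nat.lt_trichotomy i j with h | h | h
    · exact absurd hfij (fun hh => key i j h hj hh)
    · exact h
    · exact absurd hfij.symm (fun hh => key j i h hi hh)
  have hq2k : q ≤ 2 * k := by
    by_contra hgt
    push_neg at hgt
    have hkq : k < q := by omega
    rcases trunc hs (hdom (f k)) with ⟨t, ht, m, hmk, hwEE⟩ | ⟨m, hm1, hwEE⟩
    · have := hmin (k + m) ⟨t, ht, (hprefix k (le_of_lt hkq)).append hwEE⟩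
      omega
    · have hrev : Wk (EE A s x) x (f k) m := hwEE.rev (EE_symm hA s x)
      have := hmin (m + (q - k)) ⟨f q, hfS, hrev.append (hsuffix k (le_of_lt hkq))⟩
      omega
  -- first index which is in S or touched
  have hPne : {j | 1 ≤ j ∧ (f j ∈ S ∨ touched D (f j))}.Nonempty := ⟨q, hq1, Or.inl hfS⟩
  set p := sInf {j | 1 ≤ j ∧ (f j ∈ S ∨ touched D (f j))} with hpdef
  have hpmem : 1 ≤ p ∧ (f p ∈ S ∨ touched D (f p)) := Nat.sInf_mem hPne
  have hp1 : 1 ≤ p := hpmem.1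
  have hpor : f p ∈ S ∨ touched D (f p) := hpmem.2
  have hpq : p ≤ q := Nat.sInf_le ⟨hq1, Or.inl hfS⟩
  have hfresh : ∀ i, 1 ≤ i → i < p → ¬touched D (f i) ∧ f i ∉ S := by
    intro i h1 hi
    have := Nat.notMem_of_lt_sInf (s := {j | 1 ≤ j ∧ (f j ∈ S ∨ touched D (f j))}) hi
    simp only [Set.mem_setOf_eq, not_and, not_or] at this
    have h2 := this h1
    exact ⟨h2.2, h2.1⟩
  by_cases hpS : f p ∈ S
  · exact step_main hA hD hs hx hsx hxun hf0 hfS hfs hmin hq2k hp1 hpq hfresh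
      (Or.inl hpS) hinj ⟨f p, hpS, 0, Nat.zero_le _, Wk.refl D (f p)⟩
  · have hpt : touched D (f p) := hpor.resolve_left hpS
    have hdout : doutLE A S (f p) (q - p) :=
      ⟨f q, hfS, q - p, le_refl _, (hsuffix p hpq).mono EE_sub⟩
    rcases hD.2.2.2 (f p) (q - p) hpt hpS hdout with hin | hout
    · -- flip
      have hDf := good_flip hA hD
      have hxunf : ¬touched (fun a b => D b a) x := by rwa [touched_flip]
      have hfreshf : ∀ i, 1 ≤ i → i < p →
          ¬touched (fun a b => D b a) (f i) ∧ f i ∉ S := by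
        intro i h1 hi
        refine ⟨?_, (hfresh i h1 hi).2⟩
        rw [touched_flip]
        exact (hfresh i h1 hi).1
      have hporSf : f p ∈ S ∨ touched (fun a b => D b a) (f p) :=
        Or.inr (touched_flip.mpr hpt)
      have hwf : doutLE (fun a b => D b a) S (f p) (q - p) := doutLE_flip.mpr hin
      obtain ⟨D'', hsub'', hGood'', htch''⟩ := step_main hA hDf hs hx hsx hxunf hf0 hfS hfs
        hmin hq2k hp1 hpq hfreshf hporSf hinj hwf
      refine ⟨fun a b => D'' b a, ?_, good_flip hA hGood'', ?_⟩
      · intro a b h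
        exact hsub'' b a h
      · exact touched_flip.mpr htch''
    · exact step_main hA hD hs hx hsx hxun hf0 hfS hfs hmin hq2k hp1 hpq hfresh
        (Or.inr hpt) hinj hout



theorem level [Fintype V] {A : V → V → Prop} (hA : Symmetric A) {k : ℕ} {S : Set V}
    (hdom : ∀ z, doutLE A S z k)
    (hbr : ∀ s x, A s x → ∃ m, Wk (EE A s x) x s m) :
    ∃ D, Good A k S D ∧ ∀ x, x ∉ S → (∃ s ∈ S, A s x) → touched D x := by
  classical
  set U : (V → V → Prop) → Set V :=
    fun D => {x | x ∉ S ∧ (∃ s ∈ S, A s x) ∧ ¬touched D x} with hUdef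
  have main : ∀ n (D : V → V → Prop), Good A k S D → (U D).ncard ≤ n →
      ∃ D', Good A k S D' ∧ ∀ x, x ∉ S → (∃ s ∈ S, A s x) → touched D' x := by
    intro n
    induction n with
    | zero =>
      intro D hG hcard
      have hUe : U D = ∅ := by
        rw [← Set.ncard_eq_zero (Set.toFinite _)]
        omega
      refine ⟨D, hG, ?_⟩
      intro x h1 h2
      by_contra hxt
      have hmem : x ∈ U D := ⟨h1, h2, hxt⟩
      rw [hUe] at hmem
      exact hmem
    | succ n ih =>
      intro D hG hcard
      by_cases hne : (U D).Nonempty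
      · obtain ⟨x, hxS, hxadj, hxun⟩ := hne
        obtain ⟨s, hs, hsx⟩ := hxadj
        obtain ⟨D', hsub, hG', htch⟩ := step_s11 hA hG hs hxS hsx hxun hdom (hbr s x hsx)
        have htmono : ∀ z, touched D z → touched D' z := by
          rintro z ⟨w, hw | hw⟩
          · exact ⟨w, Or.inl (hsub _ _ hw)⟩
          · exact ⟨w, Or.inr (hsub _ _ hw)⟩
        have hss : U D' ⊂ U D := by
          constructor
          · rintro z ⟨h1, h2, h3⟩
            exact ⟨h1, h2, fun ht => h3 (htmono z ht)⟩
          · intro hsub2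
            have hxmem : x ∈ U D := ⟨hxS, ⟨s, hs, hsx⟩, hxun⟩
            have := hsub2 hxmem
            exact this.2.2 htch
        have hlt := Set.ncard_lt_ncard hss (Set.toFinite _)
        exact ih D' hG' (by omega)
      · rw [Set.not_nonempty_iff_eq_empty] at hne
        refine ⟨D, hG, ?_⟩
        intro x h1 h2
        by_contra hxt
        have hmem : x ∈ U D := ⟨h1, h2, hxt⟩
        rw [hne] at hmem
        exact hmem
  have hGood0 : Good A k S (fun _ _ => False) := by
    refine ⟨fun a b h => h.1, fun a b h => h.elim, ?_, ?_⟩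
    · rintro w ⟨z, hz | hz⟩ <;> exact hz.elim
    · rintro w n ⟨z, hz | hz⟩ <;> exact hz.elim
  exact main (U (fun _ _ => False)).ncard _ hGood0 (le_refl _)

theorem outer [Fintype V] {A : V → V → Prop} (hA : Symmetric A)
    (hbr : ∀ s x, A s x → ∃ m, Wk (EE A s x) x s m) :
    ∀ (k : ℕ) (S : Set V), (∀ z, doutLE A S z k) →
      ∃ D, Cons D ∧ SubA A S D ∧ ∀ u, dinLE D S u (k^2+k) ∧ doutLE D S u (k^2+k) := by
  intro k
  induction k with
  | zero =>
    intro S hdom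
    refine ⟨fun _ _ => False, fun a b h => h.1, fun a b h => h.elim, ?_⟩
    intro u
    obtain ⟨t, ht, m, hm, f, hf0, hfm, _⟩ := hdom u
    have hm0 : m = 0 := by omega
    have hut : u = t := by rw [← hf0, ← hfm, hm0]
    constructor
    · exact ⟨u, hut ▸ ht, 0, by omega, Wk.refl _ _⟩
    · exact ⟨u, hut ▸ ht, 0, by omega, Wk.refl _ _⟩
  | succ k ih =>
    intro S hdom
    obtain ⟨D1, hG1, hN⟩ := level hA hdom hbr
    set S' : Set V := S ∪ {w | touched D1 w} with hS'def
    have hdom' : ∀ z, doutLE A S' z k := by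
      intro z
      obtain ⟨t, ht, m, hm, f, hf0, hfm, hfs⟩ := hdom z
      rcases Nat.eq_zero_or_pos m with h0 | h0
      · have : z = t := by rw [← hf0, ← hfm, h0]
        exact ⟨z, Or.inl (this ▸ ht), 0, by omega, Wk.refl _ _⟩
      · have hyS' : f (m-1) ∈ S' := by
          by_cases hy : f (m-1) ∈ S
          · exact Or.inl hy
          · refine Or.inr (hN (f (m-1)) hy ⟨t, ht, ?_⟩)
            have := hfs (m-1) (by omega)
            have heq : m - 1 + 1 = m := by omega
            rw [heq] at this
            rw [← hfm]
            exact hA this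
        refine ⟨f (m-1), hyS', m - 1, by omega, f, hf0, rfl, ?_⟩
        intro i hi
        exact hfs i (by omega)
    obtain ⟨D2, hC2, hS2, hd2⟩ := ih S' hdom'
    set D : V → V → Prop := fun a b => D1 a b ∨ D2 a b with hDdef
    have hD1sub : ∀ a b, D1 a b → D a b := fun a b h => Or.inl h
    have hD2sub : ∀ a b, D2 a b → D a b := fun a b h => Or.inr h
    have htchS' : ∀ a b, D1 a b → a ∈ S' ∧ b ∈ S' :=
      fun a b h => ⟨Or.inr ⟨b, Or.inl h⟩, Or.inr ⟨a, Or.inr h⟩⟩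
    have harith : (k+1)^2 + (k+1) = (k^2+k) + (2*k+2) := by ring
    refine ⟨D, ?_, ?_, ?_⟩
    · rintro a b ⟨h1 | h1, h2 | h2⟩
      · exact hG1.1 a b ⟨h1, h2⟩
      · exact (hS2 b a h2).2 ⟨(htchS' a b h1).2, (htchS' a b h1).1⟩
      · exact (hS2 a b h1).2 ⟨(htchS' b a h2).2, (htchS' b a h2).1⟩
      · exact hC2 a b ⟨h1, h2⟩
    · rintro a b (h | h)
      · exact hG1.2.1 a b h
      · refine ⟨(hS2 a b h).1, fun hh => (hS2 a b h).2 ⟨Or.inl hh.1, Or.inl hh.2⟩⟩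
    · intro u
      constructor
      · obtain ⟨t, htS', m, hm, hwk⟩ := (hd2 u).1
        rcases htS' with htS | htch
        · exact ⟨t, htS, m, by omega, hwk.mono hD2sub⟩
        · by_cases htS : t ∈ S
          · exact ⟨t, htS, m, by omega, hwk.mono hD2sub⟩
          · obtain ⟨a, b, ha1, hb1, hab, hin, hout⟩ := hG1.2.2.1 t htch htS
            have hale : a ≤ 2*k+2 := by omega
            have h1 : dinLE D S u (a + m) :=
              (hin.mono_rel hD1sub).extend (hwk.mono hD2sub)
            exact h1.mono_n (by omega)
      · obtain ⟨t, htS', m, hm, hwk⟩ := (hd2 u).2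
        rcases htS' with htS | htch
        · exact ⟨t, htS, m, by omega, hwk.mono hD2sub⟩
        · by_cases htS : t ∈ S
          · exact ⟨t, htS, m, by omega, hwk.mono hD2sub⟩
          · obtain ⟨a, b, ha1, hb1, hab, hin, hout⟩ := hG1.2.2.1 t htch htS
            have hble : b ≤ 2*k+2 := by omega
            have h1 : doutLE D S u (m + b) :=
              (hout.mono_rel hD1sub).prepend (hwk.mono hD2sub)
            exact h1.mono_n (by omega)



/-- Convert a mathlib walk in the edge-deleted graph into a `Wk` along `EE`. -/
theorem wk_of_deleted_walk {G : SimpleGraph V} {s x a b : V}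
    (W : (G \ SimpleGraph.fromEdgeSet {s(s, x)}).Walk a b) :
    Wk (EE G.Adj s x) a b W.length := by
  refine ⟨W.getVert, W.getVert_zero, W.getVert_length, ?_⟩
  intro i hi
  have hadj := W.adj_getVert_succ hi
  rw [SimpleGraph.sdiff_adj] at hadj
  obtain ⟨h1, h2⟩ := hadj
  rw [SimpleGraph.fromEdgeSet_adj] at h2
  refine ⟨h1, ?_, ?_⟩
  · rintro ⟨ha, hb⟩
    exact h2 ⟨by rw [ha, hb]; rfl, G.ne_of_adj h1⟩
  · rintro ⟨ha, hb⟩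
    exact h2 ⟨by rw [ha, hb]; exact Sym2.eq_swap, G.ne_of_adj h1⟩

theorem hbr_of_no_bridge {G : SimpleGraph V} (hnb : ∀ e, ¬ G.IsBridge e) :
    ∀ s x, G.Adj s x → ∃ m, Wk (EE G.Adj s x) x s m := by
  intro s x hsx
  have h := hnb s(s, x)
  rw [SimpleGraph.isBridge_iff] at h
  push_neg at h
  have hreach := h
  obtain ⟨W⟩ := hreach.symm
  exact ⟨W.length, wk_of_deleted_walk W⟩

end CTaux


/-- **Chvátal–Thomassen.** Every 2-edge connected graph of radius `r`
admits a strong orientation of radius at most `r² + r`. -/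
theorem chvatal_thomassen_radius {V : Type*} [Fintype V]
    (G : SimpleGraph V) (r : ℕ)
    (h2ec : TwoEdgeConnected G) (hrad : HasRadius G r) :
    ∃ O : V → V → Prop, IsOrientation G O ∧
      ∃ c : V, ∀ u : V, DiPathLE O c u (r ^ 2 + r) ∧ DiPathLE O u c (r ^ 2 + r) := by
  classical
  obtain ⟨hconn, hnb⟩ := h2ec
  obtain ⟨-, ⟨v, hv⟩, -⟩ := hrad
  have hA : Symmetric G.Adj := fun _ _ h => h.symm
  have hbr := CTaux.hbr_of_no_bridge hnb
  have hdom : ∀ z, CTaux.doutLE G.Adj {v} z r := by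
    intro z
    obtain ⟨p, hp⟩ := hconn.exists_walk_length_eq_dist z v
    refine ⟨v, rfl, p.length, ?_, ?_⟩
    · rw [hp, SimpleGraph.dist_comm]
      exact hv z
    · exact ⟨p.getVert, p.getVert_zero, p.getVert_length, fun i hi => p.adj_getVert_succ hi⟩
  obtain ⟨D, hCons, hSub, hdists⟩ := CTaux.outer hA hbr r {v} hdom
  let φ : V ≃ Fin (Fintype.card V) := Fintype.equivFin V
  set O : V → V → Prop :=
    fun a b => D a b ∨ (G.Adj a b ∧ ¬D a b ∧ ¬D b a ∧ (φ a : ℕ) < (φ b : ℕ)) with hOdef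
  have hDO : ∀ a b, D a b → O a b := fun a b h => Or.inl h
  refine ⟨O, ⟨?_, ?_⟩, v, ?_⟩
  · rintro a b (h | h)
    · exact (hSub a b h).1
    · exact h.1
  · intro a b hab
    by_cases hD1 : D a b
    · refine ⟨fun _ => ?_, fun _ => Or.inl hD1⟩
      rintro (h' | h')
      · exact hCons a b ⟨hD1, h'⟩
      · exact h'.2.2.1 hD1
    · by_cases hD2 : D b a
      · refine ⟨?_, fun h' => absurd (Or.inl hD2) h'⟩
        rintro (h | h)
        · exact absurd h hD1
        · exact absurd hD2 h.2.2.1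
      · have hne : (φ a : ℕ) ≠ (φ b : ℕ) := by
          intro h
          exact hab.ne (φ.injective (Fin.val_injective h))
        constructor
        · rintro (h | h) (h' | h')
          · exact hD1 h
          · exact hD1 h
          · exact hD2 h'
          · have l1 := h.2.2.2
            have l2 := h'.2.2.2
            omega
        · intro h'
          refine Or.inr ⟨hab, hD1, hD2, ?_⟩
          by_contra hlt
          push_neg at hlt
          have hlt2 : (φ b : ℕ) < (φ a : ℕ) := by omega
          exact h' (Or.inr ⟨hab.symm, hD2, hD1, hlt2⟩)
  · intro u
    constructor
    · obtain ⟨t, ht, m, hm, f, h0, hmu, hs⟩ := (hdists u).1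
      have htv : t = v := ht
      exact ⟨m, hm, f, by rw [h0, htv], hmu, fun i hi => hDO _ _ (hs i hi)⟩
    · obtain ⟨t, ht, m, hm, f, h0, hmt, hs⟩ := (hdists u).2
      have htv : t = v := ht
      exact ⟨m, hm, f, h0, by rw [hmt, htv], fun i hi => hDO _ _ (hs i hi)⟩
end
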